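/- arXiv:1810.01368 — 2 statements merged into one kernel-verified Lean document; each statement's English description precedes it below -/
import Mathlib

section
/- Let ω₀ > 0, K > 0, γ > 0. Every maximal solution (q, p) : [0, t₀) → ℝ² × ℝ² of the damped system q̇ = p, ṗ = −ω₀²(1 + K(q₁² + q₂²))q − γp is defined for all t ≥ 0 (t₀ = ∞), is bounded, and satisfies (q(t), p(t)) → (0, 0) as t → ∞; in particular H(q(t), p(t)) → 0 as t → ∞, where H(q, p) = ½(p₁² + p₂²) + (ω₀²/2)(q₁² + q₂²) + (ω₀²K/4)(q₁² + q₂²)². -/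
open Filter Topology

/-- The Hamiltonian of the vibrating string:
`H(q, p) = ½(p₁² + p₂²) + (ω₀²/2)(q₁² + q₂²) + (ω₀²K/4)(q₁² + q₂²)²`. -/
noncomputable def Hstring (ω₀ K : ℝ) (q p : ℝ × ℝ) : ℝ :=
  (1 / 2) * (p.1 ^ 2 + p.2 ^ 2) + (ω₀ ^ 2 / 2) * (q.1 ^ 2 + q.2 ^ 2)
    + (ω₀ ^ 2 * K / 4) * (q.1 ^ 2 + q.2 ^ 2) ^ 2

open Set Metric

set_option maxHeartbeats 1000000

lemma hdw_fst {E F : Type*} [NormedAddCommGroup E] [NormedSpace ℝ E]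
    [NormedAddCommGroup F] [NormedSpace ℝ F] {f : ℝ → E × F} {v : E × F} {s : Set ℝ} {x : ℝ}
    (h : HasDerivWithinAt f v s x) : HasDerivWithinAt (fun t => (f t).1) v.1 s x := by
  simpa [Function.comp_def] using (ContinuousLinearMap.fst ℝ E F).hasFDerivAt.comp_hasDerivWithinAt x h

lemma hdw_snd {E F : Type*} [NormedAddCommGroup E] [NormedSpace ℝ E]
    [NormedAddCommGroup F] [NormedSpace ℝ F] {f : ℝ → E × F} {v : E × F} {s : Set ℝ} {x : ℝ}
    (h : HasDerivWithinAt f v s x) : HasDerivWithinAt (fun t => (f t).2) v.2 s x := by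
  simpa [Function.comp_def] using (ContinuousLinearMap.snd ℝ E F).hasFDerivAt.comp_hasDerivWithinAt x h

/-- derivative of the perturbed energy `V = H + ε q·p` along a solution -/
lemma vderiv (ω₀ K γ ε : ℝ) {S : Set ℝ} {q p : ℝ → ℝ × ℝ} {t : ℝ}
    (hq : HasDerivWithinAt q (p t) S t)
    (hp : HasDerivWithinAt p
      ((-(ω₀ ^ 2) * (1 + K * ((q t).1 ^ 2 + (q t).2 ^ 2))) • q t - γ • p t) S t) :
    HasDerivWithinAt
      (fun τ => Hstring ω₀ K (q τ) (p τ) + ε * ((q τ).1 * (p τ).1 + (q τ).2 * (p τ).2))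
      (-γ * ((p t).1 ^ 2 + (p t).2 ^ 2)
        + ε * (((p t).1 ^ 2 + (p t).2 ^ 2)
          - ω₀ ^ 2 * (1 + K * ((q t).1 ^ 2 + (q t).2 ^ 2)) * ((q t).1 ^ 2 + (q t).2 ^ 2)
          - γ * ((q t).1 * (p t).1 + (q t).2 * (p t).2))) S t := by
  have hq1 := hdw_fst hq
  have hq2 := hdw_snd hq
  have hp1' := hdw_fst hp
  have hp2' := hdw_snd hp
  simp only [Prod.fst_sub, Prod.snd_sub, Prod.smul_fst, Prod.smul_snd, smul_eq_mul] at hp1' hp2'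
  have comb := (((((hp1'.pow 2).add (hp2'.pow 2)).const_mul (1/2)).add
      (((hq1.pow 2).add (hq2.pow 2)).const_mul (ω₀^2/2))).add
      ((((hq1.pow 2).add (hq2.pow 2)).pow 2).const_mul (ω₀^2*K/4))).add
      (((hq1.mul hp1').add (hq2.mul hp2')).const_mul ε)
  unfold Hstring
  refine comb.congr_deriv ?_
  simp only [Pi.add_apply, Pi.pow_apply]
  push_cast
  ring

lemma antitoneOn_of_hdw {S : Set ℝ} (hconv : Convex ℝ S) {f g : ℝ → ℝ}
    (hf : ∀ t ∈ S, HasDerivWithinAt f (g t) S t)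
    (hint : ∀ t ∈ interior S, g t ≤ 0) : AntitoneOn f S := by
  apply antitoneOn_of_deriv_nonpos hconv (fun t ht => (hf t ht).continuousWithinAt)
  · intro t ht
    exact ((hf t (interior_subset ht)).hasDerivAt
      (mem_interior_iff_mem_nhds.1 ht)).differentiableAt.differentiableWithinAt
  · intro t ht
    rw [((hf t (interior_subset ht)).hasDerivAt (mem_interior_iff_mem_nhds.1 ht)).deriv]
    exact hint t ht

/-- `|ε q·p| ≤ H/2` for small ε -/
lemma eqp_bound (ω₀ K ε : ℝ) (hω₀ : 0 < ω₀) (hK : 0 < K) (hε : 0 < ε)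
    (hεa : 2*ε ≤ 1) (hεb : 2*ε ≤ ω₀^2) (q1 q2 p1 p2 : ℝ) :
    |ε * (q1*p1 + q2*p2)| ≤ (1/2) * ((1/2)*(p1^2+p2^2) + (ω₀^2/2)*(q1^2+q2^2)
      + (ω₀^2*K/4)*(q1^2+q2^2)^2) := by
  have hquart : 0 ≤ (ω₀^2*K/4)*(q1^2+q2^2)^2 := by positivity
  rw [abs_le]
  constructor
  · nlinarith [mul_nonneg hε.le (sq_nonneg (q1+p1)), mul_nonneg hε.le (sq_nonneg (q2+p2)),
      mul_nonneg (by linarith : (0:ℝ) ≤ 1 - 2*ε) (add_nonneg (sq_nonneg p1) (sq_nonneg p2)),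
      mul_nonneg (by linarith : (0:ℝ) ≤ ω₀^2 - 2*ε) (add_nonneg (sq_nonneg q1) (sq_nonneg q2))]
  · nlinarith [mul_nonneg hε.le (sq_nonneg (q1-p1)), mul_nonneg hε.le (sq_nonneg (q2-p2)),
      mul_nonneg (by linarith : (0:ℝ) ≤ 1 - 2*ε) (add_nonneg (sq_nonneg p1) (sq_nonneg p2)),
      mul_nonneg (by linarith : (0:ℝ) ≤ ω₀^2 - 2*ε) (add_nonneg (sq_nonneg q1) (sq_nonneg q2))]

/-- Key Lyapunov inequality `V' + λ V ≤ 0`, abstract version in `n = |p|²`, `s = |q|²`,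
`Q = q·p`. -/
lemma key_ineq (ω₀ K γ ε lam e0 n s Q : ℝ) (hω₀ : 0 < ω₀) (hK : 0 < K) (hγ : 0 < γ)
    (hε : 0 < ε) (hεa : 2*ε ≤ 1) (hεb : 2*ε ≤ ω₀^2) (hε2 : ε*(2*ω₀^2+γ^2) ≤ γ*ω₀^2)
    (hlam : 0 < lam) (hlam1 : 7*lam ≤ 2*γ)
    (hlam2 : lam*((3/2)*(ω₀^2/2 + ω₀^2*K*(2*e0/ω₀^2)/4)+1) ≤ ε*ω₀^2/2)
    (hn0 : 0 ≤ n) (hs0 : 0 ≤ s)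
    (hCS2 : -(2*ω₀^2*γ*Q) ≤ ω₀^4*s + γ^2*n) (hCSa : 2*Q ≤ s + n)
    (he0 : (1/2)*n + (ω₀^2/2)*s + (ω₀^2*K/4)*s^2 ≤ e0) :
    -γ*n + ε*(n - ω₀^2*(1+K*s)*s - γ*Q)
      ≤ -lam * ((1/2)*n + (ω₀^2/2)*s + (ω₀^2*K/4)*s^2 + ε*Q) := by
  set B : ℝ := (3/2)*(ω₀^2/2 + ω₀^2*K*(2*e0/ω₀^2)/4) with hB
  have he00 : 0 ≤ e0 := le_trans (by positivity) he0
  have hB0 : 0 ≤ B := by rw [hB]; positivity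
  have hR : s ≤ 2*e0/ω₀^2 := by
    rw [le_div_iff₀ (by positivity)]
    nlinarith [hn0, mul_nonneg (by positivity : (0:ℝ) ≤ ω₀^2*K/4) (sq_nonneg s)]
  -- step 1 : dissipation estimate, multiplied by 2ω₀²
  have h₁ : -γ*n + ε*(n - ω₀^2*(1+K*s)*s - γ*Q) ≤ -(γ/2)*n - (ε*ω₀^2/2)*s := by
    have h₁' : 2*ω₀^2 * (-γ*n + ε*(n - ω₀^2*(1+K*s)*s - γ*Q))
        ≤ 2*ω₀^2 * (-(γ/2)*n - (ε*ω₀^2/2)*s) := by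
      nlinarith [mul_le_mul_of_nonneg_left hCS2 hε.le,
        mul_nonneg (by nlinarith : (0:ℝ) ≤ γ*ω₀^2 - ε*(2*ω₀^2+γ^2)) hn0,
        mul_nonneg (mul_nonneg (mul_nonneg hε.le (by positivity : (0:ℝ) ≤ ω₀^4)) hK.le)
          (sq_nonneg s)]
    exact le_of_mul_le_mul_left h₁' (by positivity : (0:ℝ) < 2*ω₀^2)
  -- step 2 : V ≤ (3/4) n + B s
  have hv32 : (1/2)*n + (ω₀^2/2)*s + (ω₀^2*K/4)*s^2 + ε*Q ≤ (3/4)*n + B*s := by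
    have hQle : ε*Q ≤ (1/4)*n + (ω₀^2/4)*s := by
      nlinarith [mul_le_mul_of_nonneg_left hCSa hε.le,
        mul_nonneg (by linarith : (0:ℝ) ≤ 1 - 2*ε) hn0,
        mul_nonneg (by linarith : (0:ℝ) ≤ ω₀^2 - 2*ε) hs0]
    have hsq : (ω₀^2*K/4)*s^2 ≤ (ω₀^2*K/4)*(2*e0/ω₀^2)*s := by
      have h := mul_le_mul_of_nonneg_left (mul_le_mul_of_nonneg_right hR hs0)
        (by positivity : (0:ℝ) ≤ ω₀^2*K/4)
      calc (ω₀^2*K/4)*s^2 = ω₀^2*K/4*(s*s) := by ring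
        _ ≤ ω₀^2*K/4*(2*e0/ω₀^2*s) := h
        _ = (ω₀^2*K/4)*(2*e0/ω₀^2)*s := by ring
    rw [hB]
    nlinarith [hsq, hQle, mul_nonneg (by positivity : (0:ℝ) ≤ ω₀^2*K/4*(2*e0/ω₀^2)) hs0]
  -- step 3 : λ V ≤ (γ/2) n + (ε ω₀²/2) s
  have h₂ : lam * ((1/2)*n + (ω₀^2/2)*s + (ω₀^2*K/4)*s^2 + ε*Q)
      ≤ (γ/2)*n + (ε*ω₀^2/2)*s := by
    have t1 := mul_le_mul_of_nonneg_left hv32 hlam.le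
    have hBn : lam*B ≤ ε*ω₀^2/2 := by nlinarith
    have t2 : lam*((3/4)*n + B*s) ≤ (γ/2)*n + (ε*ω₀^2/2)*s := by
      nlinarith [mul_nonneg hn0 (by linarith : (0:ℝ) ≤ 2*γ - 7*lam),
        mul_nonneg hs0 (by linarith : (0:ℝ) ≤ ε*ω₀^2/2 - lam*B)]
    linarith
  linarith

lemma exists_consts (ω₀ K γ e0 : ℝ) (hω₀ : 0 < ω₀) (hK : 0 < K) (hγ : 0 < γ)
    (he00 : 0 ≤ e0) :
    ∃ ε lam : ℝ, 0 < ε ∧ 2*ε ≤ 1 ∧ 2*ε ≤ ω₀^2 ∧ ε*(2*ω₀^2+γ^2) ≤ γ*ω₀^2 ∧ 0 < lam ∧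
      7*lam ≤ 2*γ ∧ lam*((3/2)*(ω₀^2/2 + ω₀^2*K*(2*e0/ω₀^2)/4)+1) ≤ ε*ω₀^2/2 := by
  set B : ℝ := (3/2)*(ω₀^2/2 + ω₀^2*K*(2*e0/ω₀^2)/4) with hB
  have hB0 : 0 ≤ B := by rw [hB]; positivity
  set ε : ℝ := min (min (1/2) (ω₀^2/2)) (γ*ω₀^2/(2*ω₀^2+γ^2)) with hε
  have hε0 : 0 < ε := by
    apply lt_min (lt_min (by norm_num) (by positivity)) (by positivity)
  set lam : ℝ := min (2*γ/7) (ε*ω₀^2/(2*(B+1))) with hlam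
  have hlam0 : 0 < lam := lt_min (by positivity) (by positivity)
  refine ⟨ε, lam, hε0, ?_, ?_, ?_, hlam0, ?_, ?_⟩
  · linarith [hε, min_le_left (min (1/2 : ℝ) (ω₀^2/2)) (γ*ω₀^2/(2*ω₀^2+γ^2)),
      min_le_left (1/2 : ℝ) (ω₀^2/2)]
  · linarith [hε, min_le_left (min (1/2 : ℝ) (ω₀^2/2)) (γ*ω₀^2/(2*ω₀^2+γ^2)),
      min_le_right (1/2 : ℝ) (ω₀^2/2)]
  · have h1 : ε ≤ γ*ω₀^2/(2*ω₀^2+γ^2) := min_le_right _ _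
    have := (le_div_iff₀ (by positivity : (0:ℝ) < 2*ω₀^2+γ^2)).1 h1
    linarith
  · have := min_le_left (2*γ/7) (ε*ω₀^2/(2*(B+1)))
    linarith
  · have h1 : lam ≤ ε*ω₀^2/(2*(B+1)) := min_le_right _ _
    have := (le_div_iff₀ (by positivity : (0:ℝ) < 2*(B+1))).1 h1
    nlinarith

noncomputable def Fvf (ω₀ K γ : ℝ) (y : (ℝ × ℝ) × (ℝ × ℝ)) : (ℝ × ℝ) × (ℝ × ℝ) :=
  (y.2, (-(ω₀ ^ 2) * (1 + K * (y.1.1 ^ 2 + y.1.2 ^ 2))) • y.1 - γ • y.2)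

lemma contDiff_Fvf (ω₀ K γ : ℝ) : ContDiff ℝ 1 (Fvf ω₀ K γ) := by
  unfold Fvf; fun_prop

lemma Hstring_nonneg {ω₀ K : ℝ} (hω₀ : 0 < ω₀) (hK : 0 < K) (a b : ℝ × ℝ) :
    0 ≤ Hstring ω₀ K a b := by
  unfold Hstring; positivity

/-- Energy is nonincreasing along solutions. -/
lemma energy_mono (ω₀ K γ : ℝ) (hω₀ : 0 < ω₀) (hK : 0 < K) (hγ : 0 < γ)
    {S : Set ℝ} (hconv : Convex ℝ S) (hS : S ⊆ Ici 0) (h0 : (0:ℝ) ∈ S)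
    {q p : ℝ → ℝ × ℝ}
    (hode : ∀ t ∈ S, HasDerivWithinAt q (p t) S t ∧
      HasDerivWithinAt p
        ((-(ω₀ ^ 2) * (1 + K * ((q t).1 ^ 2 + (q t).2 ^ 2))) • q t - γ • p t) S t) :
    ∀ t ∈ S, Hstring ω₀ K (q t) (p t) ≤ Hstring ω₀ K (q 0) (p 0) := by
  have hd : ∀ t ∈ S, HasDerivWithinAt (fun τ => Hstring ω₀ K (q τ) (p τ))
      (-γ * ((p t).1 ^ 2 + (p t).2 ^ 2)) S t := by
    intro t ht
    have := vderiv ω₀ K γ 0 (hode t ht).1 (hode t ht).2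
    simpa using this
  have hanti : AntitoneOn (fun τ => Hstring ω₀ K (q τ) (p τ)) S := by
    apply antitoneOn_of_hdw hconv hd
    intro t _
    nlinarith [sq_nonneg (p t).1, sq_nonneg (p t).2, hγ.le]
  exact fun t ht => hanti h0 ht (hS ht)


lemma norm_le_of_energy {ω₀ K e0 : ℝ} (hω₀ : 0 < ω₀) (hK : 0 < K) {a b : ℝ × ℝ}
    (hb : Hstring ω₀ K a b ≤ e0) :
    ‖a‖ ≤ Real.sqrt (2*e0) + Real.sqrt (2*e0/ω₀^2) ∧
    ‖b‖ ≤ Real.sqrt (2*e0) + Real.sqrt (2*e0/ω₀^2) := by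
  have hbe : (1/2)*(b.1^2+b.2^2) + (ω₀^2/2)*(a.1^2+a.2^2)
      + (ω₀^2*K/4)*(a.1^2+a.2^2)^2 ≤ e0 := hb
  have hsq : a.1^2 + a.2^2 ≤ 2*e0/ω₀^2 := by
    rw [le_div_iff₀ (by positivity)]
    nlinarith [sq_nonneg b.1, sq_nonneg b.2,
      mul_nonneg (by positivity : (0:ℝ) ≤ ω₀^2*K/4) (sq_nonneg (a.1^2 + a.2^2))]
  have hnq : b.1^2 + b.2^2 ≤ 2*e0 := by
    nlinarith [mul_nonneg (by positivity : (0:ℝ) ≤ ω₀^2/2)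
        (add_nonneg (sq_nonneg a.1) (sq_nonneg a.2)),
      mul_nonneg (by positivity : (0:ℝ) ≤ ω₀^2*K/4) (sq_nonneg (a.1^2 + a.2^2))]
  have s1 := Real.sqrt_nonneg (2*e0)
  have s2 := Real.sqrt_nonneg (2*e0/ω₀^2)
  constructor
  · rw [Prod.norm_def, Real.norm_eq_abs, Real.norm_eq_abs]
    have h1 : |a.1| ≤ Real.sqrt (2*e0/ω₀^2) := by
      rw [← Real.sqrt_sq_eq_abs]
      exact Real.sqrt_le_sqrt (by nlinarith [sq_nonneg a.2])
    have h2 : |a.2| ≤ Real.sqrt (2*e0/ω₀^2) := by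
      rw [← Real.sqrt_sq_eq_abs]
      exact Real.sqrt_le_sqrt (by nlinarith [sq_nonneg a.1])
    exact max_le (by linarith) (by linarith)
  · rw [Prod.norm_def, Real.norm_eq_abs, Real.norm_eq_abs]
    have h1 : |b.1| ≤ Real.sqrt (2*e0) := by
      rw [← Real.sqrt_sq_eq_abs]
      exact Real.sqrt_le_sqrt (by nlinarith [sq_nonneg b.2])
    have h2 : |b.2| ≤ Real.sqrt (2*e0) := by
      rw [← Real.sqrt_sq_eq_abs]
      exact Real.sqrt_le_sqrt (by nlinarith [sq_nonneg b.1])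
    exact max_le (by linarith) (by linarith)

lemma finite_extension (ω₀ K γ : ℝ) (hω₀ : 0 < ω₀) (hK : 0 < K) (hγ : 0 < γ)
    (r : ℝ) (hr : 0 < r) (q p : ℝ → ℝ × ℝ)
    (hode : ∀ t ∈ Ico (0:ℝ) r, HasDerivWithinAt q (p t) (Ico 0 r) t ∧
      HasDerivWithinAt p
        ((-(ω₀ ^ 2) * (1 + K * ((q t).1 ^ 2 + (q t).2 ^ 2))) • q t - γ • p t) (Ico 0 r) t) :
    ∃ (t₁ : ℝ) (q' p' : ℝ → ℝ × ℝ), r < t₁ ∧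
      (∀ t : ℝ, 0 ≤ t → t < r → q' t = q t ∧ p' t = p t) ∧
      ∀ t ∈ Ico (0:ℝ) t₁, HasDerivWithinAt q' (p' t) (Ico 0 t₁) t ∧
        HasDerivWithinAt p'
          ((-(ω₀ ^ 2) * (1 + K * ((q' t).1 ^ 2 + (q' t).2 ^ 2))) • q' t - γ • p' t)
          (Ico 0 t₁) t := by
  classical
  set F : (ℝ × ℝ) × (ℝ × ℝ) → (ℝ × ℝ) × (ℝ × ℝ) := Fvf ω₀ K γ with hF_def
  set x : ℝ → (ℝ × ℝ) × (ℝ × ℝ) := fun t => (q t, p t) with hx_def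
  have hx : ∀ t ∈ Ico (0:ℝ) r, HasDerivWithinAt x (F (x t)) (Ico 0 r) t := by
    intro t ht
    exact (hode t ht).1.prodMk (hode t ht).2
  -- a priori bound on the trajectory
  set e0 : ℝ := Hstring ω₀ K (q 0) (p 0) with he0_def
  set ρ : ℝ := Real.sqrt (2*e0) + Real.sqrt (2*e0/ω₀^2) with hρ_def
  have hρ0 : 0 ≤ ρ := by positivity
  have hmono := energy_mono ω₀ K γ hω₀ hK hγ (convex_Ico 0 r) (fun t ht => ht.1)
    ⟨le_rfl, hr⟩ hode
  have hxρ : ∀ t ∈ Ico (0:ℝ) r, ‖x t‖ ≤ ρ := by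
    intro t ht
    obtain ⟨h1, h2⟩ := norm_le_of_energy hω₀ hK (hmono t ht)
    rw [hx_def, Prod.norm_def]
    exact max_le h1 h2
  -- bounds for the vector field on a compact ball
  set D : Set ((ℝ × ℝ) × (ℝ × ℝ)) := closedBall 0 (ρ+1) with hD_def
  have hDco : IsCompact D := isCompact_closedBall _ _
  have hFc : Continuous F := (contDiff_Fvf ω₀ K γ).continuous
  obtain ⟨C, hC⟩ := hDco.exists_bound_of_continuousOn hFc.continuousOn
  have hC0 : 0 ≤ C :=
    le_trans (norm_nonneg _) (hC 0 (mem_closedBall_self (by positivity)))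
  obtain ⟨L₀, hL₀⟩ := hDco.exists_bound_of_continuousOn
    ((contDiff_Fvf ω₀ K γ).continuous_fderiv one_ne_zero).continuousOn
  set Lnn : NNReal := Real.toNNReal L₀ with hL_def
  have hLip : LipschitzOnWith Lnn F D := by
    apply (convex_closedBall _ _).lipschitzOnWith_of_nnnorm_hasFDerivWithin_le
      (f' := fun y => fderiv ℝ F y)
    · intro y _
      exact (((contDiff_Fvf ω₀ K γ).differentiable one_ne_zero) y).hasFDerivAt.hasFDerivWithinAt
    · intro y hy
      rw [← NNReal.coe_le_coe, coe_nnnorm, hL_def, Real.coe_toNNReal']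
      exact le_trans (hL₀ y hy) (le_max_left _ _)
  -- existence time and the shifted initial time r'
  set ε : ℝ := 1/(C+1) with hε_def
  have hε0 : 0 < ε := by rw [hε_def]; positivity
  have hCε : C * ε < 1 := by
    rw [hε_def, mul_one_div, div_lt_one (by linarith)]; linarith
  set r' : ℝ := max (r - ε/2) (r/2) with hr'_def
  have hr'0 : 0 < r' := lt_max_of_lt_right (by linarith)
  have hr'r : r' < r := max_lt (by linarith) (by linarith)
  have hr'ε : r < r' + ε := by
    have := le_max_left (r - ε/2) (r/2)
    linarith
  have hr'S : r' ∈ Ico (0:ℝ) r := ⟨hr'0.le, hr'r⟩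
  -- Picard–Lindelöf from (r', x r')
  have hball : closedBall (x r') 1 ⊆ D := by
    rw [hD_def]
    apply closedBall_subset_closedBall'
    rw [dist_zero_right]
    linarith [hxρ r' hr'S]
  have hPL : IsPicardLindelof (fun _ y => F y) (tmin := r'-ε) (tmax := r'+ε)
      ⟨r', by constructor <;> linarith⟩ (x r') 1 0 (Real.toNNReal C) Lnn :=
    { lipschitzOnWith := fun t _ => hLip.mono hball
      continuousOn := fun y _ => continuousOn_const
      norm_le := fun t _ y hy => by
        rw [Real.coe_toNNReal _ hC0]; exact hC y (hball hy)
      mul_max_le := by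
        simp only [Real.coe_toNNReal _ hC0, NNReal.coe_one, NNReal.coe_zero, sub_zero]
        rw [show (r'+ε) - r' = ε by ring, show r' - (r'-ε) = ε by ring, max_self]
        exact hCε.le }
  obtain ⟨f, hf0, hf⟩ := hPL.exists_eq_forall_mem_Icc_hasDerivWithinAt
    (mem_closedBall_self (le_refl 0))
  have hf0 : f r' = x r' := hf0
  have hfc : ContinuousOn f (Icc (r'-ε) (r'+ε)) := fun t ht => (hf t ht).continuousWithinAt
  -- the local solution stays in the ball
  have hstay : ∀ t ∈ Icc r' (r'+ε), f t ∈ closedBall (x r') 1 := by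
    by_contra hcon
    push_neg at hcon
    obtain ⟨b, hb, hbout⟩ := hcon
    set A : Set ℝ := {t | t ∈ Icc r' (r'+ε) ∧ 1 ≤ ‖f t - x r'‖} with hA_def
    have hbA : b ∈ A := by
      refine ⟨hb, ?_⟩
      rw [mem_closedBall, dist_eq_norm] at hbout
      linarith
    have hAcl : IsClosed A := by
      have : A = Icc r' (r'+ε) ∩ (fun t => ‖f t - x r'‖) ⁻¹' (Ici 1) := by
        ext t; simp [hA_def, and_comm]
      rw [this]
      apply ContinuousOn.preimage_isClosed_of_isClosed
        (((hfc.mono (Icc_subset_Icc (by linarith) le_rfl)).sub continuousOn_const).norm)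
        isClosed_Icc isClosed_Ici
    have hAbdd : BddBelow A := ⟨r', fun y hy => hy.1.1⟩
    set T : ℝ := sInf A with hT_def
    have hTA : T ∈ A := hAcl.csInf_mem ⟨b, hbA⟩ hAbdd
    have hTr' : r' < T := by
      rcases eq_or_lt_of_le hTA.1.1 with h | h
      · exfalso
        have := hTA.2
        rw [← h, hf0, sub_self, norm_zero] at this
        linarith
      · exact h
    have hless : ∀ s ∈ Ico r' T, ‖f s - x r'‖ < 1 := by
      intro s hs
      by_contra hge
      push_neg at hge
      have hsA : s ∈ A := ⟨⟨hs.1, by linarith [hTA.1.2, hs.2]⟩, hge⟩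
      exact absurd (csInf_le hAbdd hsA) (not_le.2 hs.2)
    have hmvt := norm_image_sub_le_of_norm_deriv_le_segment'
      (f := f) (f' := fun s => F (f s)) (C := C) (a := r') (b := T)
      (fun s hs => (hf s ⟨by linarith [hs.1], by linarith [hs.2, hTA.1.2]⟩).mono
        (Icc_subset_Icc (by linarith) (by linarith [hTA.1.2])))
      (fun s hs => by
        apply hC
        rw [hD_def, mem_closedBall_zero_iff]
        calc ‖f s‖ ≤ ‖f s - x r'‖ + ‖x r'‖ := by
              simpa using norm_add_le (f s - x r') (x r')
          _ ≤ 1 + ρ := add_le_add (hless s hs).le (by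
              simpa [dist_zero_right] using hxρ r' hr'S)
          _ = ρ + 1 := by ring)
      T (right_mem_Icc.2 hTr'.le)
    rw [hf0] at hmvt
    have : (1:ℝ) ≤ C * (T - r') := le_trans hTA.2 hmvt
    have hTub : T - r' ≤ ε := by linarith [hTA.1.2]
    nlinarith
  -- uniqueness: f agrees with x on [r', r)
  have heq : ∀ t ∈ Ico r' r, x t = f t := by
    intro t ht
    rcases eq_or_lt_of_le ht.1 with h | h
    · rw [← h, hf0]
    · have huniq := ODE_solution_unique_of_mem_Icc_right
        (v := fun _ y => F y) (s := fun _ => D) (K := Lnn) (fun _ _ => hLip)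
        (f := x) (g := f) (a := r') (b := t)
        (fun s hs => ((hx s ⟨by linarith [hs.1], by linarith [hs.2, ht.2]⟩).continuousWithinAt).mono
          (fun u hu => ⟨by linarith [hu.1], by linarith [hu.2, ht.2]⟩))
        (fun s hs => ((hx s ⟨by linarith [hs.1], lt_trans hs.2 ht.2⟩).hasDerivAt
          (mem_of_superset (Ioo_mem_nhds (by linarith [hs.1] : (0:ℝ) < s)
            (lt_trans hs.2 ht.2)) Ioo_subset_Ico_self)).hasDerivWithinAt)
        (fun s hs => by
          rw [hD_def, mem_closedBall_zero_iff]
          linarith [hxρ s ⟨by linarith [hs.1], lt_trans hs.2 ht.2⟩])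
        (hfc.mono (Icc_subset_Icc (by linarith) (by linarith [ht.2])))
        (fun s hs => ((hf s ⟨by linarith [hs.1], by linarith [hs.2, ht.2]⟩).hasDerivAt
          (Icc_mem_nhds (by linarith [hs.1]) (by linarith [hs.2, ht.2]))).hasDerivWithinAt)
        (fun s hs => hball (hstay s ⟨hs.1, by linarith [hs.2, ht.2]⟩))
        hf0.symm
      exact huniq (right_mem_Icc.2 ht.1)
  -- the extension
  set t₁ : ℝ := min (r+1) (r'+ε) with ht₁_def
  have ht₁r : r < t₁ := lt_min (by linarith) hr'ε
  have ht₁ε : t₁ ≤ r'+ε := min_le_right _ _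
  set q' : ℝ → ℝ × ℝ := fun t => if t < r' then q t else (f t).1 with hq'_def
  set p' : ℝ → ℝ × ℝ := fun t => if t < r' then p t else (f t).2 with hp'_def
  have hq'eq : ∀ t, r' ≤ t → q' t = (f t).1 := fun t htt => if_neg (not_lt.2 htt)
  have hp'eq : ∀ t, r' ≤ t → p' t = (f t).2 := fun t htt => if_neg (not_lt.2 htt)
  have hq'eq' : ∀ t, t < r' → q' t = q t := fun t htt => if_pos htt
  have hp'eq' : ∀ t, t < r' → p' t = p t := fun t htt => if_pos htt
  have hagree : ∀ t : ℝ, 0 ≤ t → t < r → q' t = q t ∧ p' t = p t := by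
    intro t ht0 htr
    rcases lt_or_ge t r' with h | h
    · exact ⟨hq'eq' t h, hp'eq' t h⟩
    · have hxf := heq t ⟨h, htr⟩
      refine ⟨?_, ?_⟩
      · rw [hq'eq t h, ← hxf]
      · rw [hp'eq t h, ← hxf]
  refine ⟨t₁, q', p', ht₁r, hagree, ?_⟩
  intro t ht
  rcases lt_trichotomy t r' with hcase | hcase | hcase
  · -- t < r'
    have htS : t ∈ Ico (0:ℝ) r := ⟨ht.1, lt_trans hcase hr'r⟩
    have hmem : Ico (0:ℝ) r ∈ 𝓝[Ico (0:ℝ) t₁] t :=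
      mem_nhdsWithin.2 ⟨Iio r', isOpen_Iio, hcase,
        fun s hs => ⟨hs.2.1, lt_trans hs.1 hr'r⟩⟩
    have hev : q' =ᶠ[𝓝[Ico (0:ℝ) t₁] t] q :=
      eventuallyEq_of_mem (nhdsWithin_le_nhds (Iio_mem_nhds hcase))
        (fun s hs => hq'eq' s hs)
    have hevp : p' =ᶠ[𝓝[Ico (0:ℝ) t₁] t] p :=
      eventuallyEq_of_mem (nhdsWithin_le_nhds (Iio_mem_nhds hcase))
        (fun s hs => hp'eq' s hs)
    constructor
    · rw [hp'eq' t hcase]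
      exact ((hode t htS).1.mono_of_mem_nhdsWithin hmem).congr_of_eventuallyEq hev (hq'eq' t hcase)
    · rw [hq'eq' t hcase, hp'eq' t hcase]
      exact ((hode t htS).2.mono_of_mem_nhdsWithin hmem).congr_of_eventuallyEq hevp (hp'eq' t hcase)
  · -- t = r'
    subst hcase
    have hfr' : f r' = x r' := hf0
    have hq'r : q' r' = q r' := by rw [hq'eq r' le_rfl, hfr']
    have hp'r : p' r' = p r' := by rw [hp'eq r' le_rfl, hfr']
    have hIl : Ico (0:ℝ) t₁ ∩ Iic r' ⊆ Ico 0 r :=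
      fun s hs => ⟨hs.1.1, lt_of_le_of_lt hs.2 hr'r⟩
    have hIr : Ico (0:ℝ) t₁ ∩ Ici r' ⊆ Icc (r'-ε) (r'+ε) :=
      fun s hs => ⟨by have h2 := mem_Ici.1 hs.2; linarith,
        by have h1 := hs.1.2; linarith⟩
    have hcongl : ∀ s ∈ Ico (0:ℝ) t₁ ∩ Iic r', q' s = q s := by
      intro s hs
      rcases lt_or_eq_of_le (mem_Iic.1 hs.2) with h | h
      · exact hq'eq' s h
      · rw [h]; exact hq'r
    have hcongl' : ∀ s ∈ Ico (0:ℝ) t₁ ∩ Iic r', p' s = p s := by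
      intro s hs
      rcases lt_or_eq_of_le (mem_Iic.1 hs.2) with h | h
      · exact hp'eq' s h
      · rw [h]; exact hp'r
    have hunion : (Ico (0:ℝ) t₁ ∩ Iic r') ∪ (Ico (0:ℝ) t₁ ∩ Ici r') = Ico (0:ℝ) t₁ := by
      rw [← inter_union_distrib_left, Iic_union_Ici, inter_univ]
    have htIcc : r' ∈ Icc (r'-ε) (r'+ε) := ⟨by linarith, by linarith⟩
    constructor
    · rw [hp'eq r' le_rfl]
      rw [← hunion]
      apply HasDerivWithinAt.union
      · have hql : HasDerivWithinAt q' (p r') (Ico (0:ℝ) t₁ ∩ Iic r') r' :=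
          ((hode r' hr'S).1.mono hIl).congr hcongl hq'r
        have : (f r').2 = p r' := by rw [hfr']
        rw [this]
        exact hql
      · have hbase0 := hdw_fst (hf r' htIcc)
        have hbase : HasDerivWithinAt (fun s => (f s).1) ((f r').2)
            (Icc (r'-ε) (r'+ε)) r' := hbase0
        exact (hbase.mono hIr).congr
          (fun s hs => hq'eq s (mem_Ici.1 hs.2)) (hq'eq r' le_rfl)
    · rw [hq'r, hp'r]
      rw [← hunion]
      apply HasDerivWithinAt.union
      · exact ((hode r' hr'S).2.mono hIl).congr hcongl' hp'r
      · have hbase : HasDerivWithinAt (fun s => (f s).2)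
            ((-(ω₀ ^ 2) * (1 + K * ((q r').1 ^ 2 + (q r').2 ^ 2))) • q r' - γ • p r')
            (Icc (r'-ε) (r'+ε)) r' := by
          have h := hdw_snd (hf r' htIcc)
          rwa [hfr'] at h
        exact (hbase.mono hIr).congr
          (fun s hs => hp'eq s (mem_Ici.1 hs.2)) (hp'eq r' le_rfl)
  · -- r' < t
    have htmem : t ∈ Icc (r'-ε) (r'+ε) := ⟨by linarith, by linarith [ht.2, ht₁ε]⟩
    have hmem : Icc (r'-ε) (r'+ε) ∈ 𝓝[Ico (0:ℝ) t₁] t :=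
      mem_nhdsWithin.2 ⟨Ioi r', isOpen_Ioi, hcase,
        fun s hs => ⟨by have h1 := mem_Ioi.1 hs.1; linarith,
          by have h2 := hs.2.2; linarith⟩⟩
    have hev : q' =ᶠ[𝓝[Ico (0:ℝ) t₁] t] (fun s => (f s).1) :=
      eventuallyEq_of_mem (nhdsWithin_le_nhds (Ioi_mem_nhds hcase))
        (fun s hs => hq'eq s (le_of_lt (mem_Ioi.1 hs)))
    have hevp : p' =ᶠ[𝓝[Ico (0:ℝ) t₁] t] (fun s => (f s).2) :=
      eventuallyEq_of_mem (nhdsWithin_le_nhds (Ioi_mem_nhds hcase))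
        (fun s hs => hp'eq s (le_of_lt (mem_Ioi.1 hs)))
    constructor
    · rw [hp'eq t hcase.le]
      have hbase0 := hdw_fst (hf t htmem)
      have hbase : HasDerivWithinAt (fun s => (f s).1) ((f t).2) (Ico (0:ℝ) t₁) t :=
        hbase0.mono_of_mem_nhdsWithin hmem
      exact hbase.congr_of_eventuallyEq hev (hq'eq t hcase.le)
    · rw [hq'eq t hcase.le, hp'eq t hcase.le]
      have hbase0 := hdw_snd (hf t htmem)
      have hbase : HasDerivWithinAt (fun s => (f s).2)
          ((-(ω₀ ^ 2) * (1 + K * ((f t).1.1 ^ 2 + (f t).1.2 ^ 2))) • (f t).1 - γ • (f t).2)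
          (Ico (0:ℝ) t₁) t :=
        hbase0.mono_of_mem_nhdsWithin hmem
      exact hbase.congr_of_eventuallyEq hevp (hp'eq t hcase.le)


section
variable (ω₀ K γ : ℝ)

lemma global_convergence (hω₀ : 0 < ω₀) (hK : 0 < K) (hγ : 0 < γ) (q p : ℝ → ℝ × ℝ)
    (hode : ∀ t ∈ Ici (0:ℝ), HasDerivWithinAt q (p t) (Ici 0) t ∧
      HasDerivWithinAt p
        ((-(ω₀ ^ 2) * (1 + K * ((q t).1 ^ 2 + (q t).2 ^ 2))) • q t - γ • p t) (Ici 0) t) :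
    (∃ M : ℝ, ∀ t : ℝ, 0 ≤ t → ‖q t‖ ≤ M ∧ ‖p t‖ ≤ M) ∧
      Tendsto (fun t => (q t, p t)) atTop (𝓝 ((0 : ℝ × ℝ), (0 : ℝ × ℝ))) ∧
      Tendsto (fun t => Hstring ω₀ K (q t) (p t)) atTop (𝓝 0) := by
  set e : ℝ → ℝ := fun t => Hstring ω₀ K (q t) (p t) with he_def
  set e0 : ℝ := e 0 with he0_def
  have hmono : ∀ t ∈ Ici (0:ℝ), e t ≤ e0 :=
    energy_mono ω₀ K γ hω₀ hK hγ (convex_Ici 0) (fun _ h => h) self_mem_Ici hode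
  have henn : ∀ t, 0 ≤ e t := fun t => Hstring_nonneg hω₀ hK _ _
  have he00 : 0 ≤ e0 := henn 0
  -- the energy in explicit form
  have he_exp : ∀ t, e t = (1/2)*((p t).1^2+(p t).2^2) + (ω₀^2/2)*((q t).1^2+(q t).2^2)
      + (ω₀^2*K/4)*((q t).1^2+(q t).2^2)^2 := fun t => rfl
  obtain ⟨ε, lam, hε0, hεa, hεb, hε2, hlam0, hlam1, hlam2⟩ :=
    exists_consts ω₀ K γ e0 hω₀ hK hγ he00
  set v : ℝ → ℝ := fun t => e t + ε * ((q t).1 * (p t).1 + (q t).2 * (p t).2) with hv_def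
  -- |v - e| ≤ e/2
  have hsand : ∀ t, |ε * ((q t).1 * (p t).1 + (q t).2 * (p t).2)| ≤ (1/2) * e t := by
    intro t
    rw [he_exp]
    exact eqp_bound ω₀ K ε hω₀ hK hε0 hεa hεb _ _ _ _
  -- W = v * exp(lam t) is antitone on [0,∞)
  have hW : ∀ t ∈ Ici (0:ℝ), v t * Real.exp (lam * t) ≤ v 0 := by
    have hanti : AntitoneOn (fun t => v t * Real.exp (lam * t)) (Ici 0) := by
      apply antitoneOn_of_hdw (convex_Ici 0)
        (g := fun t => (-γ * ((p t).1 ^ 2 + (p t).2 ^ 2)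
          + ε * (((p t).1 ^ 2 + (p t).2 ^ 2)
            - ω₀ ^ 2 * (1 + K * ((q t).1 ^ 2 + (q t).2 ^ 2)) * ((q t).1 ^ 2 + (q t).2 ^ 2)
            - γ * ((q t).1 * (p t).1 + (q t).2 * (p t).2))) * Real.exp (lam * t)
          + v t * (Real.exp (lam * t) * lam))
      · intro t ht
        have hvd := vderiv ω₀ K γ ε (hode t ht).1 (hode t ht).2
        have hexp : HasDerivAt (fun τ => Real.exp (lam * τ)) (Real.exp (lam * t) * lam) t := by
          simpa using ((hasDerivAt_id t).const_mul lam).exp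
        exact hvd.mul hexp.hasDerivWithinAt
      · intro t ht
        have ht' : (0:ℝ) ≤ t := le_of_lt (by simpa [interior_Ici] using ht)
        have hkey := key_ineq ω₀ K γ ε lam e0 ((p t).1^2+(p t).2^2) ((q t).1^2+(q t).2^2)
          ((q t).1 * (p t).1 + (q t).2 * (p t).2) hω₀ hK hγ hε0 hεa hεb hε2 hlam0 hlam1 hlam2
          (by positivity) (by positivity)
          (by nlinarith [sq_nonneg (ω₀^2*(q t).1 + γ*(p t).1), sq_nonneg (ω₀^2*(q t).2 + γ*(p t).2)])
          (by nlinarith [sq_nonneg ((q t).1-(p t).1), sq_nonneg ((q t).2-(p t).2)])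
          (by rw [← he_exp]; exact hmono t ht')
        have hvte : v t = (1/2)*((p t).1^2+(p t).2^2) + (ω₀^2/2)*((q t).1^2+(q t).2^2)
            + (ω₀^2*K/4)*((q t).1^2+(q t).2^2)^2
            + ε * ((q t).1 * (p t).1 + (q t).2 * (p t).2) := by
          simp only [hv_def]; rw [he_exp t]
        have hnp : (-γ * ((p t).1 ^ 2 + (p t).2 ^ 2)
          + ε * (((p t).1 ^ 2 + (p t).2 ^ 2)
            - ω₀ ^ 2 * (1 + K * ((q t).1 ^ 2 + (q t).2 ^ 2)) * ((q t).1 ^ 2 + (q t).2 ^ 2)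
            - γ * ((q t).1 * (p t).1 + (q t).2 * (p t).2))) + lam * v t ≤ 0 := by
          rw [hvte]; linarith [hkey]
        have hexp0 : (0:ℝ) < Real.exp (lam * t) := Real.exp_pos _
        nlinarith [hnp, hexp0]
    intro t ht
    have := hanti (self_mem_Ici) ht ht
    simpa using this
  -- v t ≤ v 0 * exp (-(lam t)), hence e t → 0
  have hvle : ∀ t : ℝ, 0 ≤ t → e t ≤ 2 * v 0 * Real.exp (-(lam * t)) := by
    intro t ht
    have hE : (0:ℝ) < Real.exp (lam * t) := Real.exp_pos _
    have h1 : v t ≤ v 0 * Real.exp (-(lam * t)) := by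
      rw [Real.exp_neg]
      calc v t = v t * Real.exp (lam*t) * (Real.exp (lam*t))⁻¹ := by field_simp
        _ ≤ v 0 * (Real.exp (lam*t))⁻¹ :=
            mul_le_mul_of_nonneg_right (hW t ht) (by positivity)
    have h2 := (abs_le.1 (hsand t)).1
    have hvt : v t = e t + ε * ((q t).1 * (p t).1 + (q t).2 * (p t).2) := by
      simp only [hv_def]
    nlinarith [h1, h2, hvt]
  have hupper : Tendsto (fun t => 2 * v 0 * Real.exp (-(lam * t))) atTop (𝓝 0) := by
    have h1 : Tendsto (fun t : ℝ => lam * t) atTop atTop :=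
      Tendsto.const_mul_atTop hlam0 tendsto_id
    have h2 : Tendsto (fun t : ℝ => Real.exp (-(lam * t))) atTop (𝓝 0) := by
      have := Real.tendsto_exp_neg_atTop_nhds_zero.comp h1
      simpa [Function.comp_def] using this
    have := h2.const_mul (2 * v 0)
    simpa using this
  have he_tendsto : Tendsto e atTop (𝓝 0) := by
    apply tendsto_of_tendsto_of_tendsto_of_le_of_le' tendsto_const_nhds hupper
    · exact Eventually.of_forall henn
    · filter_upwards [eventually_ge_atTop (0:ℝ)] with t ht using hvle t ht
  refine ⟨?_, ?_, he_tendsto⟩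
  · -- boundedness
    refine ⟨Real.sqrt (2*e0) + Real.sqrt (2*e0/ω₀^2), ?_⟩
    intro t ht
    have hb := hmono t ht
    rw [he_exp] at hb
    have hsq : ((q t).1)^2 + ((q t).2)^2 ≤ 2*e0/ω₀^2 := by
      rw [le_div_iff₀ (by positivity)]
      nlinarith [sq_nonneg (p t).1, sq_nonneg (p t).2,
        mul_nonneg (by positivity : (0:ℝ) ≤ ω₀^2*K/4) (sq_nonneg (((q t).1)^2 + ((q t).2)^2))]
    have hnq : ((p t).1)^2 + ((p t).2)^2 ≤ 2*e0 := by
      nlinarith [mul_nonneg (by positivity : (0:ℝ) ≤ ω₀^2/2)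
          (add_nonneg (sq_nonneg (q t).1) (sq_nonneg (q t).2)),
        mul_nonneg (by positivity : (0:ℝ) ≤ ω₀^2*K/4) (sq_nonneg (((q t).1)^2 + ((q t).2)^2))]
    constructor
    · rw [Prod.norm_def, Real.norm_eq_abs, Real.norm_eq_abs]
      have h1 : |(q t).1| ≤ Real.sqrt (2*e0/ω₀^2) := by
        rw [← Real.sqrt_sq_eq_abs]
        exact Real.sqrt_le_sqrt (by nlinarith [sq_nonneg (q t).2])
      have h2 : |(q t).2| ≤ Real.sqrt (2*e0/ω₀^2) := by
        rw [← Real.sqrt_sq_eq_abs]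
        exact Real.sqrt_le_sqrt (by nlinarith [sq_nonneg (q t).1])
      have := Real.sqrt_nonneg (2*e0)
      exact max_le (by linarith) (by linarith)
    · rw [Prod.norm_def, Real.norm_eq_abs, Real.norm_eq_abs]
      have h1 : |(p t).1| ≤ Real.sqrt (2*e0) := by
        rw [← Real.sqrt_sq_eq_abs]
        exact Real.sqrt_le_sqrt (by nlinarith [sq_nonneg (p t).2])
      have h2 : |(p t).2| ≤ Real.sqrt (2*e0) := by
        rw [← Real.sqrt_sq_eq_abs]
        exact Real.sqrt_le_sqrt (by nlinarith [sq_nonneg (p t).1])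
      have := Real.sqrt_nonneg (2*e0/ω₀^2)
      exact max_le (by linarith) (by linarith)
  · -- convergence to the origin
    have hs_t : Tendsto (fun t => ((q t).1)^2 + ((q t).2)^2) atTop (𝓝 0) := by
      have hub : Tendsto (fun t => (2/ω₀^2) * e t) atTop (𝓝 ((2/ω₀^2) * 0)) :=
        he_tendsto.const_mul _
      rw [mul_zero] at hub
      apply tendsto_of_tendsto_of_tendsto_of_le_of_le' tendsto_const_nhds hub
      · exact Eventually.of_forall fun t => by positivity
      · refine Eventually.of_forall fun t => ?_
        have h := he_exp t
        have h' : ω₀^2 * (((q t).1)^2 + ((q t).2)^2) ≤ 2 * e t := by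
          nlinarith [sq_nonneg (p t).1, sq_nonneg (p t).2,
            mul_nonneg (by positivity : (0:ℝ) ≤ ω₀^2*K/4) (sq_nonneg (((q t).1)^2 + ((q t).2)^2))]
        rw [div_mul_eq_mul_div, le_div_iff₀ (by positivity : (0:ℝ) < ω₀^2)]
        linarith
    have hn_t : Tendsto (fun t => ((p t).1)^2 + ((p t).2)^2) atTop (𝓝 0) := by
      have hub : Tendsto (fun t => (2:ℝ) * e t) atTop (𝓝 ((2:ℝ) * 0)) :=
        he_tendsto.const_mul _
      rw [mul_zero] at hub
      apply tendsto_of_tendsto_of_tendsto_of_le_of_le' tendsto_const_nhds hub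
      · exact Eventually.of_forall fun t => by positivity
      · refine Eventually.of_forall fun t => ?_
        have h := he_exp t
        nlinarith [mul_nonneg (by positivity : (0:ℝ) ≤ ω₀^2/2)
            (add_nonneg (sq_nonneg (q t).1) (sq_nonneg (q t).2)),
          mul_nonneg (by positivity : (0:ℝ) ≤ ω₀^2*K/4) (sq_nonneg (((q t).1)^2 + ((q t).2)^2))]
    have sqrt_s : Tendsto (fun t => Real.sqrt (((q t).1)^2 + ((q t).2)^2)) atTop (𝓝 0) := by
      have := (Real.continuous_sqrt.tendsto 0).comp hs_t
      simpa [Function.comp_def] using this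
    have sqrt_n : Tendsto (fun t => Real.sqrt (((p t).1)^2 + ((p t).2)^2)) atTop (𝓝 0) := by
      have := (Real.continuous_sqrt.tendsto 0).comp hn_t
      simpa [Function.comp_def] using this
    have habs : ∀ (f : ℝ → ℝ × ℝ),
        Tendsto (fun t => Real.sqrt (((f t).1)^2 + ((f t).2)^2)) atTop (𝓝 0) →
        (Tendsto (fun t => (f t).1) atTop (𝓝 0) ∧ Tendsto (fun t => (f t).2) atTop (𝓝 0)) := by
      intro f hf
      have hneg : Tendsto (fun t => -Real.sqrt (((f t).1)^2 + ((f t).2)^2)) atTop (𝓝 0) := by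
        simpa using hf.neg
      have h1 : ∀ t, |(f t).1| ≤ Real.sqrt (((f t).1)^2 + ((f t).2)^2) := fun t => by
        rw [← Real.sqrt_sq_eq_abs]
        exact Real.sqrt_le_sqrt (by nlinarith [sq_nonneg (f t).2])
      have h2 : ∀ t, |(f t).2| ≤ Real.sqrt (((f t).1)^2 + ((f t).2)^2) := fun t => by
        rw [← Real.sqrt_sq_eq_abs]
        exact Real.sqrt_le_sqrt (by nlinarith [sq_nonneg (f t).1])
      constructor
      · apply tendsto_of_tendsto_of_tendsto_of_le_of_le' hneg hf
        · exact Eventually.of_forall fun t => (abs_le.1 (h1 t)).1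
        · exact Eventually.of_forall fun t => (abs_le.1 (h1 t)).2
      · apply tendsto_of_tendsto_of_tendsto_of_le_of_le' hneg hf
        · exact Eventually.of_forall fun t => (abs_le.1 (h2 t)).1
        · exact Eventually.of_forall fun t => (abs_le.1 (h2 t)).2
    obtain ⟨hq1, hq2⟩ := habs q sqrt_s
    obtain ⟨hp1, hp2⟩ := habs p sqrt_n
    have := (hq1.prodMk_nhds hq2).prodMk_nhds (hp1.prodMk_nhds hp2)
    exact this
end


/-- Every maximal solution of the damped vibrating string system
`q̇ = p, ṗ = −ω₀²(1 + K(q₁² + q₂²))q − γp` on `[0, t₀)` is global (`t₀ = ∞`), bounded, and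
converges to the origin; in particular the energy converges to `0`. -/
theorem damped_string_global_convergence
    (ω₀ K γ : ℝ) (hω₀ : 0 < ω₀) (hK : 0 < K) (hγ : 0 < γ)
    (t₀ : EReal) (ht₀ : 0 < t₀) (q p : ℝ → ℝ × ℝ)
    (hode : ∀ t ∈ {s : ℝ | 0 ≤ s ∧ (s : EReal) < t₀},
      HasDerivWithinAt q (p t) {s : ℝ | 0 ≤ s ∧ (s : EReal) < t₀} t ∧
      HasDerivWithinAt p
        ((-(ω₀ ^ 2) * (1 + K * ((q t).1 ^ 2 + (q t).2 ^ 2))) • q t - γ • p t)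
        {s : ℝ | 0 ≤ s ∧ (s : EReal) < t₀} t)
    (hmax : ∀ t₁ : EReal, t₀ < t₁ → ¬ ∃ q' p' : ℝ → ℝ × ℝ,
      (∀ t : ℝ, 0 ≤ t → (t : EReal) < t₀ → q' t = q t ∧ p' t = p t) ∧
      ∀ t ∈ {s : ℝ | 0 ≤ s ∧ (s : EReal) < t₁},
        HasDerivWithinAt q' (p' t) {s : ℝ | 0 ≤ s ∧ (s : EReal) < t₁} t ∧
        HasDerivWithinAt p'
          ((-(ω₀ ^ 2) * (1 + K * ((q' t).1 ^ 2 + (q' t).2 ^ 2))) • q' t - γ • p' t)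
          {s : ℝ | 0 ≤ s ∧ (s : EReal) < t₁} t) :
    t₀ = ⊤ ∧ (∃ M : ℝ, ∀ t : ℝ, 0 ≤ t → ‖q t‖ ≤ M ∧ ‖p t‖ ≤ M) ∧
      Tendsto (fun t => (q t, p t)) atTop (𝓝 ((0 : ℝ × ℝ), (0 : ℝ × ℝ))) ∧
      Tendsto (fun t => Hstring ω₀ K (q t) (p t)) atTop (𝓝 0) := by
  revert ht₀ hode hmax
  induction t₀ using EReal.rec with
  | bot =>
    intro ht₀ hode hmax
    exact absurd ht₀ (by simp)
  | coe r =>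
    intro ht₀ hode hmax
    exfalso
    have hr : 0 < r := by exact_mod_cast ht₀
    have hSeq : {s : ℝ | 0 ≤ s ∧ (s : EReal) < ((r:ℝ) : EReal)} = Ico (0:ℝ) r := by
      ext s; simp [EReal.coe_lt_coe_iff, mem_Ico]
    rw [hSeq] at hode
    obtain ⟨t₁, q', p', ht₁r, hagree, hext⟩ :=
      finite_extension ω₀ K γ hω₀ hK hγ r hr q p hode
    apply hmax ((t₁ : ℝ) : EReal) (by exact_mod_cast ht₁r)
    refine ⟨q', p', ?_, ?_⟩
    · intro t ht0 htr
      exact hagree t ht0 (by exact_mod_cast htr)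
    · have hSeq1 : {s : ℝ | 0 ≤ s ∧ (s : EReal) < ((t₁:ℝ) : EReal)} = Ico (0:ℝ) t₁ := by
        ext s; simp [EReal.coe_lt_coe_iff, mem_Ico]
      rw [hSeq1]
      exact hext
  | top =>
    intro ht₀ hode hmax
    have hSeq : {s : ℝ | 0 ≤ s ∧ (s : EReal) < ⊤} = Ici (0:ℝ) := by
      ext s; simp [EReal.coe_lt_top, mem_Ici]
    rw [hSeq] at hode
    obtain ⟨hbdd, hconv, hH⟩ := global_convergence ω₀ K γ hω₀ hK hγ q p hode
    exact ⟨rfl, hbdd, hconv, hH⟩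
end

section
/- Let ω₀ > 0, K > 0, γ > 0, H* > 0, and let (q, p) : [0, t₀) → ℝ² × ℝ² be a maximal solution of the system q̇ = p, ṗ = −ω₀²(1 + K(q₁² + q₂²))q + γp with (q(0), p(0)) ≠ (0, 0) and H(q(0), p(0)) < H*, where H(q, p) = ½(p₁² + p₂²) + (ω₀²/2)(q₁² + q₂²) + (ω₀²K/4)(q₁² + q₂²)². Then the function t ↦ H(q(t), p(t)) is nondecreasing on [0, t₀), and there exists T ∈ (0, t₀) such that H(q(T), p(T)) = H*. -/
open Filter Topology

open Set Metric NNReal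
set_option maxHeartbeats 1000000

private lemma sqle {x y : ℝ} (h : x^2 ≤ y^2) (hy : 0 ≤ y) : x ≤ y := by
  nlinarith [sq_nonneg (x - y), sq_nonneg (x + y)]

private lemma monoOn_of_derivWithin {S : Set ℝ} (hS : Convex ℝ S) {f g : ℝ → ℝ}
    (hf : ∀ t ∈ S, HasDerivWithinAt f (g t) S t) (hg : ∀ t ∈ S, 0 ≤ g t) :
    MonotoneOn f S := by
  apply monotoneOn_of_deriv_nonneg hS (fun t ht => (hf t ht).continuousWithinAt)
  · intro t ht
    exact ((hf t (interior_subset ht)).hasDerivAt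
      (mem_interior_iff_mem_nhds.1 ht)).differentiableAt.differentiableWithinAt
  · intro t ht
    rw [((hf t (interior_subset ht)).hasDerivAt (mem_interior_iff_mem_nhds.1 ht)).deriv]
    exact hg t (interior_subset ht)

private lemma pl_exists_solution_mem {E : Type*} [NormedAddCommGroup E] [NormedSpace ℝ E]
    [CompleteSpace E] {v : ℝ → E → E} {tMin tMax : ℝ} {t₀ : Icc tMin tMax} (x₀ : E)
    {a L C : ℝ≥0}
    (hpl : IsPicardLindelof v t₀ x₀ a 0 C L) :
    ∃ f : ℝ → E, f t₀ = x₀ ∧ (∀ t ∈ Icc tMin tMax, f t ∈ closedBall x₀ a) ∧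
      ∀ t ∈ Icc tMin tMax, HasDerivWithinAt f (v t (f t)) (Icc tMin tMax) t := by
  obtain ⟨α, hα⟩ := ODE.FunSpace.exists_isFixedPt_next hpl (mem_closedBall_self le_rfl)
  refine ⟨α.compProj, by rw [ODE.FunSpace.compProj_val, ← hα, ODE.FunSpace.next_apply₀],
    fun t _ => α.compProj_mem_closedBall hpl.mul_max_le, fun t ht => ?_⟩
  apply ODE.hasDerivWithinAt_picard_Icc t₀.2 hpl.continuousOn_uncurry
    α.continuous_compProj.continuousOn (fun _ ht' => α.compProj_mem_closedBall hpl.mul_max_le)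
    x₀ ht |>.congr_of_mem _ ht
  intro t' ht'
  nth_rw 1 [← hα]
  rw [ODE.FunSpace.compProj_of_mem ht', ODE.FunSpace.next_apply]


private lemma keyineq {w g e Kc n m sx : ℝ} (hw : 0 < w) (hg : 0 < g) (hK : 0 < Kc)
    (he0 : 0 < e) (heg : e ≤ g)
    (he3 : e * (2*(3*w^2 + 4*g^2)) ≤ g*w^2)
    (hn0 : 0 ≤ n) (hm0 : 0 ≤ m)
    (h2s : 4*g*w^2*sx ≤ w^4*n + 4*g^2*m) :
    e * ((1/2)*m + (w^2/2)*n + (w^2*Kc/4)*n^2 - e*sx) ≤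
      g * m - e * (m - w^2*(1 + Kc*n)*n + g * sx) := by
  have hmain : 0 ≤ 4*g*w^2 * ((g - (3/2)*e)*m + (e*w^2/2)*n + (3/4)*e*w^2*Kc*n^2 - e*(g-e)*sx) := by
    nlinarith [mul_le_mul_of_nonneg_left h2s (mul_nonneg he0.le (sub_nonneg.2 heg)),
      mul_nonneg (by nlinarith [he3] : (0:ℝ) ≤ g*w^2 - (6*e*w^2 + 8*e*g^2)) (mul_nonneg hg.le hm0),
      mul_nonneg (mul_nonneg (sq_nonneg g) (sq_nonneg w)) hm0,
      mul_nonneg (mul_nonneg he0.le (mul_nonneg hg.le (sq_nonneg g))) hm0,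
      mul_nonneg (mul_nonneg (sq_nonneg e) (sq_nonneg g)) hm0,
      mul_nonneg (mul_nonneg (mul_nonneg he0.le hg.le) (pow_pos hw 4).le) hn0,
      mul_nonneg (mul_nonneg (sq_nonneg e) (pow_pos hw 4).le) hn0,
      mul_nonneg (mul_nonneg (mul_nonneg (mul_nonneg he0.le hg.le) (pow_pos hw 4).le) hK.le)
        (sq_nonneg n)]
  have hmain2 := (mul_nonneg_iff_of_pos_left (by positivity : (0:ℝ) < 4*g*w^2)).1 hmain
  linarith [hmain2]

private noncomputable def Fvec (ω₀ K γ : ℝ) (x : (ℝ×ℝ)×(ℝ×ℝ)) : (ℝ×ℝ)×(ℝ×ℝ) :=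
  (x.2, (-(ω₀^2) * (1 + K * (x.1.1^2 + x.1.2^2))) • x.1 + γ • x.2)

private lemma comp_abs_le (z : (ℝ×ℝ)×(ℝ×ℝ)) :
    |z.1.1| ≤ ‖z‖ ∧ |z.1.2| ≤ ‖z‖ ∧ |z.2.1| ≤ ‖z‖ ∧ |z.2.2| ≤ ‖z‖ := by
  have h1 := norm_fst_le z
  have h2 := norm_snd_le z
  have h11 := norm_fst_le z.1
  have h12 := norm_snd_le z.1
  have h21 := norm_fst_le z.2
  have h22 := norm_snd_le z.2
  rw [Real.norm_eq_abs] at h11 h12 h21 h22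
  exact ⟨h11.trans h1, h12.trans h1, h21.trans h2, h22.trans h2⟩

private lemma sqcomp {ρ a : ℝ} (h : |a| ≤ ρ) : a^2 ≤ ρ^2 := by
  have h2 := pow_le_pow_left₀ (abs_nonneg a) h 2
  rwa [sq_abs] at h2

private lemma absc_le {w Kc ρ a b : ℝ} (hw : 0 < w) (hK : 0 < Kc)
    (ha : a^2 ≤ ρ^2) (hb : b^2 ≤ ρ^2) :
    |(-(w^2) * (1 + Kc * (a^2 + b^2)))| ≤ w^2*(1+2*Kc*ρ^2) := by
  rw [abs_of_nonpos]
  · nlinarith [mul_nonneg (mul_nonneg (sq_nonneg w) hK.le)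
      (by linarith : (0:ℝ) ≤ 2*ρ^2 - (a^2+b^2))]
  · nlinarith [mul_nonneg (sq_nonneg w) (mul_nonneg hK.le
      (by positivity : (0:ℝ) ≤ a^2+b^2)), sq_nonneg w]

private lemma Flip {ω₀ K γ ρ : ℝ} (hω₀ : 0 < ω₀) (hK : 0 < K) (hγ : 0 < γ) (hρ : 0 < ρ)
    {x y : (ℝ×ℝ)×(ℝ×ℝ)} (hx : ‖x‖ ≤ ρ) (hy : ‖y‖ ≤ ρ) :
    ‖Fvec ω₀ K γ x - Fvec ω₀ K γ y‖
      ≤ (ω₀^2*(1+2*K*ρ^2) + 4*ω₀^2*K*ρ^2 + γ + 1) * ‖x - y‖ := by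
  obtain ⟨hx11, hx12, hx21, hx22⟩ := comp_abs_le x
  obtain ⟨hy11, hy12, hy21, hy22⟩ := comp_abs_le y
  obtain ⟨hd11, hd12, hd21, hd22⟩ := comp_abs_le (x - y)
  have hd11' : |x.1.1 - y.1.1| ≤ ‖x - y‖ := by simpa using hd11
  have hd12' : |x.1.2 - y.1.2| ≤ ‖x - y‖ := by simpa using hd12
  have hd1 : ‖x.1 - y.1‖ ≤ ‖x - y‖ := by
    simpa using norm_fst_le (x - y)
  have hd2 : ‖x.2 - y.2‖ ≤ ‖x - y‖ := by
    simpa using norm_snd_le (x - y)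
  have hy1 : ‖y.1‖ ≤ ρ := le_trans (norm_fst_le y) hy
  set c1 : ℝ := -(ω₀^2) * (1 + K * (x.1.1^2 + x.1.2^2)) with hc1
  set c2 : ℝ := -(ω₀^2) * (1 + K * (y.1.1^2 + y.1.2^2)) with hc2
  have hb1 : x.1.1^2 ≤ ρ^2 := sqcomp (le_trans hx11 hx)
  have hb2 : x.1.2^2 ≤ ρ^2 := sqcomp (le_trans hx12 hx)
  have habs1 : |c1| ≤ ω₀^2*(1+2*K*ρ^2) := by
    rw [hc1]; exact absc_le hω₀ hK hb1 hb2
  have habs12 : |c1 - c2| ≤ 4*ρ*ω₀^2*K*‖x-y‖ := by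
    have hsub : c1 - c2 = (-(ω₀^2)*K)*((x.1.1^2 - y.1.1^2) + (x.1.2^2 - y.1.2^2)) := by
      rw [hc1, hc2]; ring
    rw [hsub, abs_mul]
    have habsc : |(-(ω₀^2)*K)| = ω₀^2*K := by
      rw [abs_of_nonpos (by nlinarith [sq_nonneg ω₀, hK.le, mul_nonneg (sq_nonneg ω₀) hK.le])]
      ring
    rw [habsc]
    have e1 : |x.1.1^2 - y.1.1^2| ≤ ‖x-y‖*(2*ρ) := by
      have hfac : x.1.1^2 - y.1.1^2 = (x.1.1-y.1.1)*(x.1.1+y.1.1) := by ring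
      rw [hfac, abs_mul]
      apply mul_le_mul hd11' (le_trans (abs_add_le _ _) (by
        linarith [le_trans hx11 hx, le_trans hy11 hy])) (abs_nonneg _) (norm_nonneg _)
    have e2 : |x.1.2^2 - y.1.2^2| ≤ ‖x-y‖*(2*ρ) := by
      have hfac : x.1.2^2 - y.1.2^2 = (x.1.2-y.1.2)*(x.1.2+y.1.2) := by ring
      rw [hfac, abs_mul]
      apply mul_le_mul hd12' (le_trans (abs_add_le _ _) (by
        linarith [le_trans hx12 hx, le_trans hy12 hy])) (abs_nonneg _) (norm_nonneg _)
    have e3 : |x.1.1^2 - y.1.1^2 + (x.1.2^2 - y.1.2^2)| ≤ 2*(‖x-y‖*(2*ρ)) :=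
      le_trans (abs_add_le (x.1.1^2 - y.1.1^2) (x.1.2^2 - y.1.2^2)) (by linarith)
    calc ω₀^2*K * |x.1.1^2 - y.1.1^2 + (x.1.2^2 - y.1.2^2)|
        ≤ ω₀^2*K * (2*(‖x-y‖*(2*ρ))) := by
          apply mul_le_mul_of_nonneg_left e3 (by positivity)
      _ = 4*ρ*ω₀^2*K*‖x-y‖ := by ring
  have hdecomp : Fvec ω₀ K γ x - Fvec ω₀ K γ y
      = (x.2 - y.2, c1 • (x.1 - y.1) + (c1 - c2) • y.1 + γ • (x.2 - y.2)) := by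
    refine Prod.ext ?_ ?_
    · simp [Fvec]
    · simp only [Fvec, Prod.snd_sub, hc1, hc2]
      module
  rw [hdecomp, Prod.norm_def]
  apply max_le
  · have h1 : (0:ℝ) ≤ ‖x - y‖ := norm_nonneg _
    have h2 : ‖x.2 - y.2‖ ≤ ‖x-y‖ := hd2
    dsimp only
    have hnn : 0 ≤ (ω₀^2*(1+2*K*ρ^2) + 4*ω₀^2*K*ρ^2 + γ) * ‖x - y‖ :=
      mul_nonneg (by positivity) (norm_nonneg _)
    nlinarith [hd2, norm_nonneg (x - y)]
  · dsimp only
    calc ‖c1 • (x.1-y.1) + (c1-c2) • y.1 + γ • (x.2-y.2)‖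
        ≤ ‖c1 • (x.1-y.1)‖ + ‖(c1-c2) • y.1‖ + ‖γ • (x.2-y.2)‖ := norm_add₃_le
      _ = |c1| *‖x.1-y.1‖ + |c1-c2| *‖y.1‖ + |γ| *‖x.2-y.2‖ := by
          rw [norm_smul, norm_smul, norm_smul, Real.norm_eq_abs, Real.norm_eq_abs,
            Real.norm_eq_abs]
      _ ≤ (ω₀^2*(1+2*K*ρ^2) + 4*ω₀^2*K*ρ^2 + γ + 1) * ‖x - y‖ := by
          have m1 : |c1| *‖x.1-y.1‖ ≤ (ω₀^2*(1+2*K*ρ^2))*‖x-y‖ :=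
            mul_le_mul habs1 hd1 (norm_nonneg _) (by positivity)
          have m2 : |c1-c2| *‖y.1‖ ≤ (4*ρ*ω₀^2*K*‖x-y‖)*ρ :=
            mul_le_mul habs12 hy1 (norm_nonneg _) (by positivity)
          have m3 : |γ| *‖x.2-y.2‖ ≤ γ*‖x-y‖ := by
            rw [abs_of_pos hγ]
            exact mul_le_mul_of_nonneg_left hd2 hγ.le
          nlinarith [norm_nonneg (x-y)]

private lemma Fbound {ω₀ K γ ρ : ℝ} (hω₀ : 0 < ω₀) (hK : 0 < K) (hγ : 0 < γ) (hρ : 0 < ρ)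
    {x : (ℝ×ℝ)×(ℝ×ℝ)} (hx : ‖x‖ ≤ ρ) :
    ‖Fvec ω₀ K γ x‖ ≤ ρ*(1 + ω₀^2*(1+2*K*ρ^2) + γ) := by
  obtain ⟨hx11, hx12, hx21, hx22⟩ := comp_abs_le x
  have hx1 : ‖x.1‖ ≤ ρ := le_trans (norm_fst_le x) hx
  have hx2 : ‖x.2‖ ≤ ρ := le_trans (norm_snd_le x) hx
  have hb1 : x.1.1^2 ≤ ρ^2 := sqcomp (le_trans hx11 hx)
  have hb2 : x.1.2^2 ≤ ρ^2 := sqcomp (le_trans hx12 hx)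
  have habs1 : |(-(ω₀^2) * (1 + K * (x.1.1^2 + x.1.2^2)))| ≤ ω₀^2*(1+2*K*ρ^2) :=
    absc_le hω₀ hK hb1 hb2
  rw [Fvec, Prod.norm_def]
  apply max_le
  · dsimp only
    have hnn : 0 ≤ ρ*(ω₀^2*(1+2*K*ρ^2) + γ) :=
      mul_nonneg hρ.le (by positivity)
    nlinarith [hx2]
  · dsimp only
    calc ‖(-(ω₀^2) * (1 + K * (x.1.1^2 + x.1.2^2))) • x.1 + γ • x.2‖
        ≤ ‖(-(ω₀^2) * (1 + K * (x.1.1^2 + x.1.2^2))) • x.1‖ + ‖γ • x.2‖ := norm_add_le _ _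
      _ = |(-(ω₀^2) * (1 + K * (x.1.1^2 + x.1.2^2)))| *‖x.1‖ + |γ| *‖x.2‖ := by
          rw [norm_smul, norm_smul, Real.norm_eq_abs, Real.norm_eq_abs]
      _ ≤ ρ*(1 + ω₀^2*(1+2*K*ρ^2) + γ) := by
          have m1 : |(-(ω₀^2) * (1 + K * (x.1.1^2 + x.1.2^2)))| *‖x.1‖
              ≤ (ω₀^2*(1+2*K*ρ^2))*ρ := mul_le_mul habs1 hx1 (norm_nonneg _) (by positivity)
          have m3 : |γ| *‖x.2‖ ≤ γ*ρ := by
            rw [abs_of_pos hγ]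
            exact mul_le_mul_of_nonneg_left hx2 hγ.le
          nlinarith

private lemma G0pos {w e Kc n m sx : ℝ} (hw : 0 < w) (hK : 0 < Kc) (he0 : 0 < e)
    (he1 : e ≤ 1/2) (he2 : e ≤ w^2/2) (hn0 : 0 ≤ n) (hm0 : 0 ≤ m) (hs : sx^2 ≤ n*m)
    (hstate : 0 < n + m) : 0 < (1/2)*m + (w^2/2)*n + (w^2*Kc/4)*n^2 - e*sx := by
  have hsx : sx ≤ (n+m)/2 := sqle (by nlinarith [sq_nonneg (n-m)]) (by linarith)
  have hc : 0 ≤ w^2*Kc/4*n^2 := by positivity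
  have h1 : e*sx ≤ e*((n+m)/2) := mul_le_mul_of_nonneg_left hsx he0.le
  rcases lt_or_ge 0 m with h | h
  · nlinarith [mul_nonneg (sq_nonneg w) hn0]
  · have hm'' : m = 0 := le_antisymm h hm0
    have hn'' : 0 < n := by rw [hm''] at hstate; simpa using hstate
    nlinarith [mul_pos hn'' (pow_pos hw 2)]

private lemma Gtop {e n m sx hh Hs Bq : ℝ} (he0 : 0 < e) (hm : m ≤ 2*Hs) (hn : n ≤ Bq)
    (hs : sx^2 ≤ n*m) (hn0 : 0 ≤ n) (hm0 : 0 ≤ m) (hhlt : hh < Hs) :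
    hh - e*sx ≤ Hs + e*(2*Hs + Bq)/2 := by
  have hsx : -sx ≤ (n+m)/2 := sqle (by nlinarith [sq_nonneg (n-m)]) (by linarith)
  have h1 : e*(-sx) ≤ e*((n+m)/2) := mul_le_mul_of_nonneg_left hsx he0.le
  nlinarith [mul_le_mul_of_nonneg_left hm he0.le, mul_le_mul_of_nonneg_left hn he0.le]

/-- For a maximal solution of the anti-damped vibrating string system
`q̇ = p, ṗ = −ω₀²(1 + K(q₁² + q₂²))q + γp` with nonzero initial state of energy below
`H* > 0`, the energy is nondecreasing and reaches the level `H*` at some time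
`T ∈ (0, t₀)`. -/
theorem antidamped_string_reaches_energy_level
    (ω₀ K γ Hstar : ℝ) (hω₀ : 0 < ω₀) (hK : 0 < K) (hγ : 0 < γ) (hHstar : 0 < Hstar)
    (t₀ : EReal) (ht₀ : 0 < t₀) (q p : ℝ → ℝ × ℝ)
    (h0 : (q 0, p 0) ≠ ((0 : ℝ × ℝ), (0 : ℝ × ℝ)))
    (hH0 : Hstring ω₀ K (q 0) (p 0) < Hstar)
    (hode : ∀ t ∈ {s : ℝ | 0 ≤ s ∧ (s : EReal) < t₀},
      HasDerivWithinAt q (p t) {s : ℝ | 0 ≤ s ∧ (s : EReal) < t₀} t ∧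
      HasDerivWithinAt p
        ((-(ω₀ ^ 2) * (1 + K * ((q t).1 ^ 2 + (q t).2 ^ 2))) • q t + γ • p t)
        {s : ℝ | 0 ≤ s ∧ (s : EReal) < t₀} t)
    (hmax : ∀ t₁ : EReal, t₀ < t₁ → ¬ ∃ q' p' : ℝ → ℝ × ℝ,
      (∀ t : ℝ, 0 ≤ t → (t : EReal) < t₀ → q' t = q t ∧ p' t = p t) ∧
      ∀ t ∈ {s : ℝ | 0 ≤ s ∧ (s : EReal) < t₁},
        HasDerivWithinAt q' (p' t) {s : ℝ | 0 ≤ s ∧ (s : EReal) < t₁} t ∧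
        HasDerivWithinAt p'
          ((-(ω₀ ^ 2) * (1 + K * ((q' t).1 ^ 2 + (q' t).2 ^ 2))) • q' t + γ • p' t)
          {s : ℝ | 0 ≤ s ∧ (s : EReal) < t₁} t) :
    MonotoneOn (fun t => Hstring ω₀ K (q t) (p t)) {s : ℝ | 0 ≤ s ∧ (s : EReal) < t₀} ∧
      ∃ T : ℝ, 0 < T ∧ (T : EReal) < t₀ ∧ Hstring ω₀ K (q T) (p T) = Hstar := by
  set S := {s : ℝ | 0 ≤ s ∧ (s : EReal) < t₀} with hSdef
  have hS0 : (0:ℝ) ∈ S := ⟨le_refl 0, by exact_mod_cast ht₀⟩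
  have hSconv : Convex ℝ S := by
    intro x hx y hy a b ha hb hab
    refine ⟨by simp only [smul_eq_mul]; nlinarith [mul_nonneg ha hx.1, mul_nonneg hb hy.1], ?_⟩
    have hle : a • x + b • y ≤ max x y := by
      simp only [smul_eq_mul]
      rcases le_total x y with h | h
      · have h1 : a*x ≤ a*y := mul_le_mul_of_nonneg_left h ha
        have h2 : a*y + b*y = y := by rw [← add_mul, hab, one_mul]
        have h3 := le_max_right x y
        linarith
      · have h1 : b*y ≤ b*x := mul_le_mul_of_nonneg_left h hb
        have h2 : a*x + b*x = x := by rw [← add_mul, hab, one_mul]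
        have h3 := le_max_left x y
        linarith
    have hcast : ((a • x + b • y : ℝ) : EReal) ≤ ((max x y : ℝ) : EReal) :=
      EReal.coe_le_coe_iff.2 hle
    refine lt_of_le_of_lt hcast ?_
    rcases max_cases x y with ⟨he, _⟩ | ⟨he, _⟩ <;> rw [he]
    · exact hx.2
    · exact hy.2
  have hq1 : ∀ t ∈ S, HasDerivWithinAt (fun u => (q u).1) ((p t).1) S t := fun t ht => by
    simpa using ((hode t ht).1.hasFDerivWithinAt.fst).hasDerivWithinAt
  have hq2 : ∀ t ∈ S, HasDerivWithinAt (fun u => (q u).2) ((p t).2) S t := fun t ht => by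
    simpa using ((hode t ht).1.hasFDerivWithinAt.snd).hasDerivWithinAt
  have hp1 : ∀ t ∈ S, HasDerivWithinAt (fun u => (p u).1)
      ((-(ω₀^2) * (1 + K * ((q t).1^2+(q t).2^2))) * (q t).1 + γ * (p t).1) S t := fun t ht => by
    simpa using ((hode t ht).2.hasFDerivWithinAt.fst).hasDerivWithinAt
  have hp2 : ∀ t ∈ S, HasDerivWithinAt (fun u => (p u).2)
      ((-(ω₀^2) * (1 + K * ((q t).1^2+(q t).2^2))) * (q t).2 + γ * (p t).2) S t := fun t ht => by
    simpa using ((hode t ht).2.hasFDerivWithinAt.snd).hasDerivWithinAt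
  have hHd : ∀ t ∈ S, HasDerivWithinAt (fun u => Hstring ω₀ K (q u) (p u))
      (γ * ((p t).1^2 + (p t).2^2)) S t := by
    intro t ht
    have h1 := (((hp1 t ht).pow 2).add ((hp2 t ht).pow 2)).const_mul (1/2 : ℝ)
    have h2 := (((hq1 t ht).pow 2).add ((hq2 t ht).pow 2)).const_mul (ω₀^2/2)
    have h3 := ((((hq1 t ht).pow 2).add ((hq2 t ht).pow 2)).pow 2).const_mul (ω₀^2*K/4)
    have hsum := (h1.add h2).add h3
    refine hsum.congr_deriv ?_
    push_cast
    simp only [Pi.add_apply, Pi.pow_apply]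
    ring
  have hmono : MonotoneOn (fun t => Hstring ω₀ K (q t) (p t)) S :=
    monoOn_of_derivWithin hSconv hHd (fun t ht => by positivity)
  refine ⟨hmono, ?_⟩
  by_contra hcon
  push_neg at hcon
  set h : ℝ → ℝ := fun t => Hstring ω₀ K (q t) (p t) with hhdef
  have hcont : ContinuousOn h S := fun t ht => (hHd t ht).continuousWithinAt
  have hIccS : ∀ {t : ℝ}, t ∈ S → Icc 0 t ⊆ S := by
    intro t ht u hu
    exact ⟨hu.1, lt_of_le_of_lt (EReal.coe_le_coe_iff.2 hu.2) ht.2⟩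
  -- energy stays below Hstar
  have hlt : ∀ t ∈ S, h t < Hstar := by
    intro t ht
    rcases eq_or_lt_of_le ht.1 with h0t | h0t
    · rw [← h0t]; exact hH0
    by_contra hge
    push_neg at hge
    have hiv := intermediate_value_Icc h0t.le (hcont.mono (hIccS ht))
    obtain ⟨T, hT, hTeq⟩ := hiv ⟨hH0.le, hge⟩
    have hTpos : 0 < T := by
      rcases eq_or_lt_of_le hT.1 with h' | h'
      · exfalso; rw [← h'] at hTeq; exact absurd hTeq (ne_of_lt hH0)
      · exact h'
    exact hcon T hTpos (lt_of_le_of_lt (EReal.coe_le_coe_iff.2 hT.2) ht.2) hTeq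
  have hHexp : ∀ t : ℝ, h t = (1/2) * ((p t).1^2 + (p t).2^2)
      + (ω₀^2/2) * ((q t).1^2 + (q t).2^2)
      + (ω₀^2*K/4) * ((q t).1^2 + (q t).2^2)^2 := fun t => rfl
  have hbm : ∀ t ∈ S, (p t).1^2 + (p t).2^2 ≤ 2*Hstar := by
    intro t ht
    have h1 := hlt t ht
    rw [hHexp t] at h1
    have hn0 : (0:ℝ) ≤ (q t).1^2+(q t).2^2 := by positivity
    nlinarith [mul_nonneg (by positivity : (0:ℝ) ≤ ω₀^2/2) hn0,
      mul_nonneg (by positivity : (0:ℝ) ≤ ω₀^2*K/4) (sq_nonneg ((q t).1^2+(q t).2^2))]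
  set Bq : ℝ := 2*Hstar/ω₀^2 with hBqdef
  have hbn : ∀ t ∈ S, (q t).1^2 + (q t).2^2 ≤ Bq := by
    intro t ht
    have h1 := hlt t ht
    rw [hHexp t] at h1
    rw [hBqdef, le_div_iff₀ (pow_pos hω₀ 2)]
    nlinarith [sq_nonneg (p t).1, sq_nonneg (p t).2,
      mul_nonneg (by positivity : (0:ℝ) ≤ ω₀^2*K/4) (sq_nonneg ((q t).1^2+(q t).2^2))]
  -- the auxiliary constant ε
  set ε : ℝ := min (1/2) (min (ω₀^2/2) (γ*ω₀^2 / (2*(3*ω₀^2 + 4*γ^2)))) with hεdef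
  have hε0 : 0 < ε := by
    apply lt_min (by norm_num)
    exact lt_min (by positivity) (by positivity)
  have hε1 : ε ≤ 1/2 := min_le_left _ _
  have hε2 : ε ≤ ω₀^2/2 := le_trans (min_le_right _ _) (min_le_left _ _)
  have hε3 : ε * (2*(3*ω₀^2 + 4*γ^2)) ≤ γ*ω₀^2 := by
    have h1 : ε ≤ γ*ω₀^2 / (2*(3*ω₀^2 + 4*γ^2)) :=
      le_trans (min_le_right _ _) (min_le_right _ _)
    rw [le_div_iff₀ (by positivity)] at h1
    exact h1
  have hεγ : ε ≤ γ := by nlinarith [sq_nonneg ω₀, sq_nonneg γ, mul_pos hγ (pow_pos hω₀ 2)]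
  -- the auxiliary functional G
  set G : ℝ → ℝ := fun t => h t - ε * ((q t).1*(p t).1 + (q t).2*(p t).2) with hGdef
  have hGd : ∀ t ∈ S, HasDerivWithinAt G
      (γ * ((p t).1^2 + (p t).2^2) - ε * (((p t).1^2 + (p t).2^2)
        - ω₀^2*(1 + K*((q t).1^2 + (q t).2^2))*((q t).1^2 + (q t).2^2)
        + γ * ((q t).1*(p t).1 + (q t).2*(p t).2))) S t := by
    intro t ht
    have hs1 := (((hq1 t ht).mul (hp1 t ht)).add ((hq2 t ht).mul (hp2 t ht))).const_mul ε
    have := (hHd t ht).sub hs1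
    refine this.congr_deriv ?_
    ring
  -- key differential inequality : ε * G ≤ G'
  have hkey : ∀ t ∈ S, ε * G t ≤ γ * ((p t).1^2 + (p t).2^2) - ε * (((p t).1^2 + (p t).2^2)
        - ω₀^2*(1 + K*((q t).1^2 + (q t).2^2))*((q t).1^2 + (q t).2^2)
        + γ * ((q t).1*(p t).1 + (q t).2*(p t).2)) := by
    intro t ht
    set n : ℝ := (q t).1^2 + (q t).2^2 with hndef
    set m : ℝ := (p t).1^2 + (p t).2^2 with hmdef
    set sx : ℝ := (q t).1*(p t).1 + (q t).2*(p t).2 with hsxdef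
    have hn0 : 0 ≤ n := by rw [hndef]; positivity
    have hm0 : 0 ≤ m := by rw [hmdef]; positivity
    have hs2 : sx^2 ≤ n*m := by
      rw [hsxdef, hndef, hmdef]
      nlinarith [sq_nonneg ((q t).1*(p t).2 - (q t).2*(p t).1)]
    have h2s : 4*γ*ω₀^2*sx ≤ ω₀^4*n + 4*γ^2*m := by
      apply sqle _ (by positivity)
      nlinarith [sq_nonneg (ω₀^4*n - 4*γ^2*m), hs2,
        mul_nonneg (mul_nonneg (sq_nonneg γ) (sq_nonneg (ω₀^2))) (sub_nonneg.2 hs2)]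
    have hGt : G t = (1/2)*m + (ω₀^2/2)*n + (ω₀^2*K/4)*n^2 - ε*sx := by
      rw [hGdef]; simp only; rw [hHexp t]
    rw [hGt]
    exact keyineq hω₀ hγ hK hε0 hεγ hε3 hn0 hm0 h2s
  -- Cauchy-Schwarz for the cross term, at every time
  have hCS : ∀ t : ℝ, ((q t).1*(p t).1 + (q t).2*(p t).2)^2
      ≤ ((q t).1^2 + (q t).2^2) * ((p t).1^2 + (p t).2^2) := fun t => by
    nlinarith [sq_nonneg ((q t).1*(p t).2 - (q t).2*(p t).1)]
  -- φ = G * exp(-ε t) is monotone, hence G grows exponentially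
  have hφd : ∀ t ∈ S, HasDerivWithinAt (fun u => G u * Real.exp (-ε*u))
      ((γ * ((p t).1^2 + (p t).2^2) - ε * (((p t).1^2 + (p t).2^2)
        - ω₀^2*(1 + K*((q t).1^2 + (q t).2^2))*((q t).1^2 + (q t).2^2)
        + γ * ((q t).1*(p t).1 + (q t).2*(p t).2)) - ε * G t) * Real.exp (-ε*t)) S t := by
    intro t ht
    have he : HasDerivWithinAt (fun u : ℝ => Real.exp (-ε*u)) (Real.exp (-ε*t) * (-ε*1)) S t :=
      (((hasDerivAt_id t).const_mul (-ε)).exp).hasDerivWithinAt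
    have hmul := (hGd t ht).mul he
    refine hmul.congr_deriv ?_
    ring
  have hφmono : MonotoneOn (fun u => G u * Real.exp (-ε*u)) S := by
    apply monoOn_of_derivWithin hSconv hφd
    intro t ht
    have h1 := hkey t ht
    exact mul_nonneg (by linarith) (Real.exp_pos _).le
  have hgrow : ∀ t ∈ S, G 0 * Real.exp (ε*t) ≤ G t := by
    intro t ht
    have h1 := hφmono hS0 ht ht.1
    simp only [mul_zero, neg_zero, Real.exp_zero, mul_one] at h1
    have h2 := mul_le_mul_of_nonneg_right h1 (Real.exp_pos (ε*t)).le
    rw [mul_assoc, ← Real.exp_add] at h2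
    simpa using h2
  -- G 0 is positive
  have hsqpos : ∀ x : ℝ, x ≠ 0 → 0 < x^2 :=
    fun x hx => lt_of_le_of_ne (sq_nonneg x) (Ne.symm (pow_ne_zero 2 hx))
  have hstate : 0 < ((q 0).1^2 + (q 0).2^2) + ((p 0).1^2 + (p 0).2^2) := by
    have hne : q 0 ≠ 0 ∨ p 0 ≠ 0 := by
      by_contra hno
      push_neg at hno
      exact h0 (by rw [hno.1, hno.2])
    have hq4 := sq_nonneg ((q 0).1)
    have hq5 := sq_nonneg ((q 0).2)
    have hp4 := sq_nonneg ((p 0).1)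
    have hp5 := sq_nonneg ((p 0).2)
    rcases hne with hqz | hpz
    · have hcomp : (q 0).1 ≠ 0 ∨ (q 0).2 ≠ 0 := by
        by_contra hno
        push_neg at hno
        exact hqz (Prod.ext hno.1 hno.2)
      rcases hcomp with hc | hc
      · linarith [hsqpos _ hc]
      · linarith [hsqpos _ hc]
    · have hcomp : (p 0).1 ≠ 0 ∨ (p 0).2 ≠ 0 := by
        by_contra hno
        push_neg at hno
        exact hpz (Prod.ext hno.1 hno.2)
      rcases hcomp with hc | hc
      · linarith [hsqpos _ hc]
      · linarith [hsqpos _ hc]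
  have hG0 : 0 < G 0 := by
    have hG0e : G 0 = (1/2)*((p 0).1^2+(p 0).2^2) + (ω₀^2/2)*((q 0).1^2+(q 0).2^2)
        + (ω₀^2*K/4)*((q 0).1^2+(q 0).2^2)^2 - ε*((q 0).1*(p 0).1 + (q 0).2*(p 0).2) := by
      rw [hGdef]; simp only; rw [hHexp 0]
    rw [hG0e]
    exact G0pos hω₀ hK hε0 hε1 hε2 (by positivity) (by positivity) (hCS 0) hstate
  -- G is bounded above while the energy stays below Hstar
  set M : ℝ := Hstar + ε*(2*Hstar + Bq)/2 with hMdef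
  have hGM : ∀ t ∈ S, G t ≤ M := by
    intro t ht
    exact Gtop hε0 (hbm t ht) (hbn t ht) (hCS t) (by positivity) (by positivity) (hlt t ht)
  have hM0 : 0 < M := by
    have : 0 ≤ Bq := by rw [hBqdef]; positivity
    have h2 : 0 ≤ ε*(2*Hstar + Bq)/2 := by positivity
    rw [hMdef]; linarith
  -- hence time is bounded, so t₀ is finite
  set Tstar : ℝ := Real.log (M / G 0) / ε with hTdef
  have hTbnd : ∀ t ∈ S, t ≤ Tstar := by
    intro t ht
    have h1 := hgrow t ht
    have h2 := hGM t ht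
    have h3 : Real.exp (ε*t) ≤ M / G 0 := by
      rw [le_div_iff₀ hG0]
      nlinarith
    have h4 : ε*t ≤ Real.log (M / G 0) :=
      (Real.le_log_iff_exp_le (div_pos hM0 hG0)).2 h3
    rw [hTdef, le_div_iff₀ hε0]
    linarith
  have htop : t₀ ≠ ⊤ := by
    intro htop
    have hmem : (max Tstar 0 + 1 : ℝ) ∈ S := by
      refine ⟨by nlinarith [le_max_right Tstar (0:ℝ)], ?_⟩
      rw [htop]; exact EReal.coe_lt_top _
    have hb1 := hTbnd _ hmem
    have hb2 := le_max_left Tstar 0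
    linarith
  have hbot : t₀ ≠ ⊥ := ne_of_gt (lt_trans EReal.bot_lt_zero ht₀)
  set τ : ℝ := t₀.toReal with hτdef
  have hτcoe : (τ : EReal) = t₀ := EReal.coe_toReal htop hbot
  have hτpos : 0 < τ := by
    have hlt0 : ((0:ℝ) : EReal) < (τ : EReal) := by
      rw [hτcoe]; exact_mod_cast ht₀
    exact_mod_cast hlt0
  have hmemS : ∀ u : ℝ, u ∈ S ↔ 0 ≤ u ∧ u < τ := by
    intro u
    constructor
    · rintro ⟨h1, h2⟩
      refine ⟨h1, ?_⟩
      rw [← hτcoe] at h2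
      exact_mod_cast h2
    · rintro ⟨h1, h2⟩
      refine ⟨h1, ?_⟩
      rw [← hτcoe]
      exact_mod_cast h2
  -- the trajectory is bounded
  set R₀ : ℝ := max (Real.sqrt (2*Hstar)) (Real.sqrt Bq) with hR₀def
  have hR₀0 : 0 ≤ R₀ := le_trans (Real.sqrt_nonneg _) (le_max_left _ _)
  have habs' : ∀ (x b : ℝ), x^2 ≤ b → |x| ≤ Real.sqrt b := by
    intro x b hxb
    have hb : 0 ≤ b := le_trans (sq_nonneg x) hxb
    apply sqle _ (Real.sqrt_nonneg b)
    rw [sq_abs, Real.sq_sqrt hb]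
    exact hxb
  have hRtraj : ∀ t ∈ S, ‖((q t, p t) : (ℝ×ℝ)×(ℝ×ℝ))‖ ≤ R₀ := by
    intro t ht
    have hm := hbm t ht
    have hn := hbn t ht
    rw [Prod.norm_def]
    apply max_le <;> dsimp only <;> rw [Prod.norm_def] <;> apply max_le <;>
      rw [Real.norm_eq_abs]
    · exact le_trans (habs' _ _ (by nlinarith [sq_nonneg (q t).2])) (le_max_right _ _)
    · exact le_trans (habs' _ _ (by nlinarith [sq_nonneg (q t).1])) (le_max_right _ _)
    · exact le_trans (habs' _ _ (by nlinarith [sq_nonneg (p t).2])) (le_max_left _ _)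
    · exact le_trans (habs' _ _ (by nlinarith [sq_nonneg (p t).1])) (le_max_left _ _)
  -- constants for Picard-Lindelöf
  set ρ : ℝ := R₀ + 1 with hρdef
  have hρ0 : 0 < ρ := by linarith
  set Lr : ℝ := ω₀^2*(1+2*K*ρ^2) + 4*ω₀^2*K*ρ^2 + γ + 1 with hLrdef
  have hLr0 : 0 ≤ Lr := by positivity
  set Cb : ℝ := ρ*(1 + ω₀^2*(1+2*K*ρ^2) + γ) with hCbdef
  have hCb0 : 0 < Cb := by positivity
  set δ : ℝ := 1/Cb with hδdef
  have hδ0 : 0 < δ := by positivity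
  set σ : ℝ := min (δ/2) (τ/2) with hσdef
  have hσ0 : 0 < σ := lt_min (by positivity) (by positivity)
  set t₁ : ℝ := τ - σ with ht₁def
  have ht₁0 : 0 < t₁ := by
    have h1 : σ ≤ τ/2 := min_le_right _ _
    rw [ht₁def]; linarith
  have ht₁τ : t₁ < τ := by rw [ht₁def]; linarith
  have ht₁S : t₁ ∈ S := (hmemS t₁).2 ⟨ht₁0.le, ht₁τ⟩
  have hτlt : τ < t₁ + δ := by
    have h1 : σ ≤ δ/2 := min_le_left _ _
    rw [ht₁def]; linarith
  have hFlipOn : LipschitzOnWith (Real.toNNReal Lr) (Fvec ω₀ K γ)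
      (closedBall (0:(ℝ×ℝ)×(ℝ×ℝ)) ρ) := by
    apply LipschitzOnWith.of_dist_le_mul
    intro a ha b hb
    rw [dist_eq_norm, dist_eq_norm, Real.coe_toNNReal _ hLr0]
    exact Flip hω₀ hK hγ hρ0 (mem_closedBall_zero_iff.1 ha) (mem_closedBall_zero_iff.1 hb)
  have hsubs : closedBall ((q t₁, p t₁) : (ℝ×ℝ)×(ℝ×ℝ)) 1 ⊆ closedBall (0:(ℝ×ℝ)×(ℝ×ℝ)) ρ := by
    apply closedBall_subset_closedBall'
    rw [dist_zero_right]
    have hb := hRtraj t₁ ht₁S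
    rw [hρdef]; linarith
  have hpl : IsPicardLindelof (fun _ x => Fvec ω₀ K γ x) (tmin := t₁) (tmax := t₁+δ)
      ⟨t₁, le_refl _, by linarith⟩ ((q t₁, p t₁))
      1 0 (Real.toNNReal Cb) (Real.toNNReal Lr) := by
    constructor
    · intro t ht
      exact hFlipOn.mono (by simpa using hsubs)
    · intro x hx
      exact continuousOn_const
    · intro t ht x hx
      rw [Real.coe_toNNReal _ hCb0.le]
      exact Fbound hω₀ hK hγ hρ0 (mem_closedBall_zero_iff.1 (hsubs (by simpa using hx)))
    · have h1 : t₁+δ-t₁ = δ := by ring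
      have h2 : t₁-t₁ = (0:ℝ) := by ring
      simp only [Real.coe_toNNReal _ hCb0.le, NNReal.coe_one, NNReal.coe_zero, sub_zero]
      rw [h1, h2, max_eq_left hδ0.le, hδdef, mul_one_div, div_self (ne_of_gt hCb0)]
  obtain ⟨f, hft₁, hfmem, hfode⟩ := pl_exists_solution_mem _ hpl
  -- the combined trajectory solves the autonomous ODE
  set κ : ℝ → (ℝ×ℝ)×(ℝ×ℝ) := fun u => (q u, p u) with hκdef
  have hκd : ∀ w ∈ S, HasDerivWithinAt κ (Fvec ω₀ K γ (κ w)) S w := by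
    intro w hw
    exact (hode w hw).1.prodMk (hode w hw).2
  -- uniqueness: our solution coincides with the Picard-Lindelöf one on [t₁, τ)
  have huniq : ∀ u, t₁ ≤ u → u < τ → κ u = f u := by
    intro u hu1 hu2
    have hsub : Icc t₁ u ⊆ S := by
      intro z hz
      exact (hmemS z).2 ⟨le_trans ht₁0.le hz.1, lt_of_le_of_lt hz.2 hu2⟩
    have hsub2 : Icc t₁ u ⊆ Icc t₁ (t₁+δ) := by
      intro z hz
      exact ⟨hz.1, le_trans hz.2 (by linarith)⟩
    have happ := ODE_solution_unique_of_mem_Icc_right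
      (v := fun _ x => Fvec ω₀ K γ x) (s := fun _ => closedBall (0:(ℝ×ℝ)×(ℝ×ℝ)) ρ)
      (K := Real.toNNReal Lr) (f := κ) (g := f) (a := t₁) (b := u)
      (fun _ _ => hFlipOn)
      (fun w hw => ((hκd w (hsub hw)).continuousWithinAt).mono hsub)
      (fun w hw => by
        have hwS : w ∈ S := hsub ⟨hw.1, hw.2.le⟩
        have hmem : S ∈ 𝓝[Ici w] w := by
          apply mem_of_superset (inter_mem_nhdsWithin (Ici w) (Iio_mem_nhds (lt_trans hw.2 hu2)))
          rintro z ⟨hz1, hz2⟩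
          exact (hmemS z).2 ⟨le_trans (le_trans ht₁0.le hw.1) hz1, hz2⟩
        exact (hκd w hwS).mono_of_mem_nhdsWithin hmem)
      (fun w hw => mem_closedBall_zero_iff.2
        (le_trans (hRtraj w (hsub ⟨hw.1, hw.2.le⟩)) (by rw [hρdef]; linarith)))
      (fun w hw => ((hfode w (hsub2 hw)).continuousWithinAt).mono hsub2)
      (fun w hw => by
        have hmem : Icc t₁ (t₁+δ) ∈ 𝓝[Ici w] w := by
          apply mem_of_superset (inter_mem_nhdsWithin (Ici w)
            (Iio_mem_nhds (lt_trans (lt_of_lt_of_le hw.2 hu2.le) hτlt)))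
          rintro z ⟨hz1, hz2⟩
          exact ⟨le_trans hw.1 hz1, hz2.le⟩
        exact (hfode w (hsub2 ⟨hw.1, hw.2.le⟩)).mono_of_mem_nhdsWithin hmem)
      (fun w hw => hsubs (by simpa using hfmem w (hsub2 ⟨hw.1, hw.2.le⟩)))
      hft₁.symm
    exact happ ⟨hu1, le_refl u⟩
  -- glue the two solutions and contradict maximality
  set text : ℝ := t₁ + δ with htextdef
  set q' : ℝ → ℝ×ℝ := fun u => if u < τ then q u else (f u).1 with hq'def
  set p' : ℝ → ℝ×ℝ := fun u => if u < τ then p u else (f u).2 with hp'def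
  refine hmax (text : EReal) ?_ ⟨q', p', ?_, ?_⟩
  · rw [← hτcoe]
    exact_mod_cast hτlt
  · intro u hu0 hut
    have huτ : u < τ := by
      rw [← hτcoe] at hut
      exact_mod_cast hut
    constructor
    · simp only [hq'def]; rw [if_pos huτ]
    · simp only [hp'def]; rw [if_pos huτ]
  · intro u hu
    obtain ⟨hu0, hu2⟩ := hu
    have hu2' : u < text := by exact_mod_cast hu2
    have hmemB : ∀ z : ℝ, z ∈ {s : ℝ | 0 ≤ s ∧ (s:EReal) < ((text : ℝ) : EReal)} ↔
        0 ≤ z ∧ z < text := fun z =>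
      ⟨fun h => ⟨h.1, by exact_mod_cast h.2⟩, fun h => ⟨h.1, by exact_mod_cast h.2⟩⟩
    rcases lt_or_ge u τ with hcase | hcase
    · -- u < τ : the glued functions agree with (q, p) near u
      have hSu : u ∈ S := (hmemS u).2 ⟨hu0, hcase⟩
      have hSmem : S ∈ 𝓝[{s : ℝ | 0 ≤ s ∧ (s:EReal) < ((text : ℝ) : EReal)}] u := by
        apply mem_of_superset (inter_mem_nhdsWithin _ (Iio_mem_nhds hcase))
        rintro z ⟨hz1, hz2⟩
        exact (hmemS z).2 ⟨((hmemB z).1 hz1).1, hz2⟩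
      have hq'eq : q' =ᶠ[𝓝[{s : ℝ | 0 ≤ s ∧ (s:EReal) < ((text : ℝ) : EReal)}] u] q := by
        filter_upwards [nhdsWithin_le_nhds (Iio_mem_nhds hcase)] with z hz
        simp only [hq'def]; rw [if_pos (show z < τ from hz)]
      have hp'eq : p' =ᶠ[𝓝[{s : ℝ | 0 ≤ s ∧ (s:EReal) < ((text : ℝ) : EReal)}] u] p := by
        filter_upwards [nhdsWithin_le_nhds (Iio_mem_nhds hcase)] with z hz
        simp only [hp'def]; rw [if_pos (show z < τ from hz)]
      have e1 : q' u = q u := by simp only [hq'def]; rw [if_pos hcase]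
      have e2 : p' u = p u := by simp only [hp'def]; rw [if_pos hcase]
      constructor
      · have h1 := ((hode u hSu).1.mono_of_mem_nhdsWithin hSmem).congr_of_eventuallyEq hq'eq e1
        rw [e2]
        exact h1
      · have h1 := ((hode u hSu).2.mono_of_mem_nhdsWithin hSmem).congr_of_eventuallyEq hp'eq e2
        rw [e1, e2]
        exact h1
    · -- τ ≤ u : the glued functions agree with f near u
      have ht₁u : t₁ < u := lt_of_lt_of_le ht₁τ hcase
      have hIoomem : Ioo t₁ text ∈ 𝓝[{s : ℝ | 0 ≤ s ∧ (s:EReal) < ((text : ℝ) : EReal)}] u := by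
        apply mem_of_superset (inter_mem_nhdsWithin _ (Ioi_mem_nhds ht₁u))
        rintro z ⟨hz1, hz2⟩
        exact ⟨hz2, ((hmemB z).1 hz1).2⟩
      have hfag1 : ∀ z ∈ Ioo t₁ text, q' z = (f z).1 := by
        intro z hz
        rcases lt_or_ge z τ with h | h
        · have hz' := huniq z hz.1.le h
          simp only [hq'def]; rw [if_pos h]
          rw [show q z = (κ z).1 from rfl, hz']
        · simp only [hq'def]; rw [if_neg (not_lt.2 h)]
      have hfag2 : ∀ z ∈ Ioo t₁ text, p' z = (f z).2 := by
        intro z hz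
        rcases lt_or_ge z τ with h | h
        · have hz' := huniq z hz.1.le h
          simp only [hp'def]; rw [if_pos h]
          rw [show p z = (κ z).2 from rfl, hz']
        · simp only [hp'def]; rw [if_neg (not_lt.2 h)]
      have hfd := ((hfode u ⟨ht₁u.le, hu2'.le⟩).mono Ioo_subset_Icc_self).mono_of_mem_nhdsWithin hIoomem
      have e1 : q' u = (f u).1 := hfag1 u ⟨ht₁u, hu2'⟩
      have e2 : p' u = (f u).2 := hfag2 u ⟨ht₁u, hu2'⟩
      have hq'ev : q' =ᶠ[𝓝[{s : ℝ | 0 ≤ s ∧ (s:EReal) < ((text : ℝ) : EReal)}] u]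
          (fun z => (f z).1) := by
        filter_upwards [hIoomem] with z hz
        exact hfag1 z hz
      have hp'ev : p' =ᶠ[𝓝[{s : ℝ | 0 ≤ s ∧ (s:EReal) < ((text : ℝ) : EReal)}] u]
          (fun z => (f z).2) := by
        filter_upwards [hIoomem] with z hz
        exact hfag2 z hz
      constructor
      · have h1 : HasDerivWithinAt (fun z => (f z).1) ((f u).2)
            {s : ℝ | 0 ≤ s ∧ (s:EReal) < ((text : ℝ) : EReal)} u := by
          simpa [Fvec] using (hfd.hasFDerivWithinAt.fst).hasDerivWithinAt
        have h2 := h1.congr_of_eventuallyEq hq'ev e1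
        rw [e2]
        exact h2
      · have h1 : HasDerivWithinAt (fun z => (f z).2)
            ((-(ω₀^2) * (1 + K*((f u).1.1^2 + (f u).1.2^2))) • (f u).1 + γ • (f u).2)
            {s : ℝ | 0 ≤ s ∧ (s:EReal) < ((text : ℝ) : EReal)} u := by
          simpa [Fvec] using (hfd.hasFDerivWithinAt.snd).hasDerivWithinAt
        have h2 := h1.congr_of_eventuallyEq hp'ev e2
        rw [e1, e2]
        exact h2
end
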